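/- arXiv:math/0409584 — 6 statements merged into one kernel-verified Lean document; each statement's English description precedes it below -/
import Mathlib

section
/- Let P be a fine (finitely generated and cancellative) monoid, and let m_P ⊂ P be the maximal ideal consisting of non-invertible elements. Then the m_P-adic filtration on P is separated, i.e. the intersection ⋂_{n∈ℕ} m_P^n is empty. -/
open scoped Classical

section Aux

variable {P : Type*} [CancelCommMonoid P] (S : Finset P)

/-- Interpret an exponent vector as a product of powers of generators. -/
def monRep (v : ↥S → ℕ) : P := ∏ s : ↥S, (s : P) ^ (v s)

/-- The number of non-unit factors in an exponent vector. -/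
noncomputable def monWeight (v : ↥S → ℕ) : ℕ := ∑ s : ↥S, if IsUnit (s : P) then 0 else v s

theorem monRep_add (v w : ↥S → ℕ) : monRep S (v + w) = monRep S v * monRep S w := by
  simp [monRep, pow_add, Finset.prod_mul_distrib]

theorem monRep_zero : monRep S (0 : ↥S → ℕ) = 1 := by simp [monRep]

theorem monWeight_add (v w : ↥S → ℕ) :
    monWeight S (v + w) = monWeight S v + monWeight S w := by
  simp only [monWeight, Pi.add_apply]
  rw [← Finset.sum_add_distrib]
  refine Finset.sum_congr rfl fun s _ => ?_
  split <;> simp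

theorem monRep_sum {ι : Type*} (t : Finset ι) (w : ι → ↥S → ℕ) :
    monRep S (∑ i ∈ t, w i) = ∏ i ∈ t, monRep S (w i) := by
  classical
  induction t using Finset.induction with
  | empty => simp [monRep_zero]
  | insert _ _ h ih => simp [Finset.sum_insert h, Finset.prod_insert h, monRep_add, ih]

theorem monWeight_sum {ι : Type*} (t : Finset ι) (w : ι → ↥S → ℕ) :
    monWeight S (∑ i ∈ t, w i) = ∑ i ∈ t, monWeight S (w i) := by
  classical
  induction t using Finset.induction with
  | empty => simp [monWeight]
  | insert _ _ h ih => simp [Finset.sum_insert h, monWeight_add, ih]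

theorem exists_monRep (hS : Submonoid.closure (S : Set P) = ⊤) (p : P) :
    ∃ v : ↥S → ℕ, p = monRep S v := by
  have hp : p ∈ Submonoid.closure (S : Set P) := hS ▸ Submonoid.mem_top p
  induction hp using Submonoid.closure_induction with
  | mem s hs =>
      refine ⟨Pi.single ⟨s, hs⟩ 1, ?_⟩
      rw [monRep, Finset.prod_eq_single (⟨s, hs⟩ : ↥S)] <;>
        simp +contextual [Pi.single_apply]
  | one => exact ⟨0, (monRep_zero S).symm⟩
  | mul a b _ _ ha hb =>
      obtain ⟨v, hv⟩ := ha
      obtain ⟨w, hw⟩ := hb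
      exact ⟨v + w, by rw [monRep_add, ← hv, ← hw]⟩

theorem isUnit_of_monWeight_eq_zero {v : ↥S → ℕ} (h : monWeight S v = 0) :
    IsUnit (monRep S v) := by
  rw [monRep]
  refine Finset.prod_induction _ IsUnit (fun a b => IsUnit.mul) isUnit_one fun s _ => ?_
  by_cases hs : IsUnit (s : P)
  · exact hs.pow _
  · have : v s = 0 := by
      have := Finset.sum_eq_zero_iff.mp h s (Finset.mem_univ s)
      simpa [hs] using this
    simp [this]

end Aux

/-- The maximal ideal `m_P` of a commutative monoid: the set of non-invertible elements. -/
def monNonUnits (P : Type*) [CommMonoid P] : Set P := {x | ¬ IsUnit x}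

/-- The `n`-th power `m_P ^ n` of the maximal ideal: all products of `n` non-invertible
elements, times arbitrary elements of `P`. -/
def monPow (P : Type*) [CommMonoid P] (n : ℕ) : Set P :=
  {x | ∃ f : Fin n → P, (∀ i, ¬ IsUnit (f i)) ∧ ∃ a : P, x = a * ∏ i, f i}

/-- For a fine (finitely generated and cancellative) monoid `P`, the `m_P`-adic filtration is
separated: `⋂ₙ m_P ^ n = ∅`. -/
theorem stmt1 {P : Type*} [CancelCommMonoid P] (hfg : Monoid.FG P) :
    (⋂ n : ℕ, monPow P n) = ∅ := by
  classical
  obtain ⟨S, hS⟩ := hfg.fg_top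
  rw [Set.eq_empty_iff_forall_notMem]
  intro x hx
  rw [Set.mem_iInter] at hx
  -- For each n, write x as a product of powers of generators with weight ≥ n.
  have key : ∀ n : ℕ, ∃ v : ↥S → ℕ, x = monRep S v ∧ n ≤ monWeight S v := by
    intro n
    obtain ⟨f, hf, a, ha⟩ := hx n
    obtain ⟨va, hva⟩ := exists_monRep S hS a
    choose vf hvf using fun i => exists_monRep S hS (f i)
    refine ⟨va + ∑ i, vf i, ?_, ?_⟩
    · rw [monRep_add, monRep_sum, ← hva, ha]
      exact congrArg _ (Finset.prod_congr rfl fun i _ => hvf i)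
    · rw [monWeight_add, monWeight_sum]
      have h1 : ∀ i : Fin n, 1 ≤ monWeight S (vf i) := by
        intro i
        rcases Nat.eq_zero_or_pos (monWeight S (vf i)) with h0 | h0
        · exact absurd (hvf i ▸ isUnit_of_monWeight_eq_zero S h0) (hf i)
        · exact h0
      calc n = ∑ _i : Fin n, 1 := by simp
        _ ≤ ∑ i, monWeight S (vf i) := Finset.sum_le_sum fun i _ => h1 i
        _ ≤ _ := Nat.le_add_left _ _
  choose u hux huw using key
  -- Dickson's lemma: extract a monotone subsequence.
  obtain ⟨g, hg⟩ := (Set.isPWO_of_wellQuasiOrderedLE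
    (Set.univ : Set (↥S → ℕ))).exists_monotone_subseq (f := u)
    (fun n => Set.mem_univ _)
  set n0 := g 0 with hn0
  set m := g (monWeight S (u (g 0)) + 1) with hm
  have hle : u n0 ≤ u m := hg (Nat.zero_le _)
  have hwlt : monWeight S (u n0) < monWeight S (u m) := by
    calc monWeight S (u n0) < monWeight S (u (g 0)) + 1 := Nat.lt_succ_self _
      _ ≤ g (monWeight S (u (g 0)) + 1) := g.strictMono.le_apply
      _ ≤ monWeight S (u m) := huw m
  -- the difference vector
  set d : ↥S → ℕ := fun s => u m s - u n0 s with hd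
  have hsum : u m = u n0 + d := by
    funext s
    exact (Nat.add_sub_cancel' (hle s)).symm
  have hrep1 : monRep S d = 1 := by
    have : monRep S (u n0) * 1 = monRep S (u n0) * monRep S d := by
      rw [mul_one, ← monRep_add, ← hsum, ← hux, ← hux]
    exact (mul_left_cancel this).symm
  have hwd : 0 < monWeight S d := by
    have heq : monWeight S (u m) = monWeight S (u n0) + monWeight S d := by
      rw [hsum, monWeight_add]
    omega
  -- some non-unit generator appears in d
  obtain ⟨s, -, hs⟩ : ∃ s : ↥S, s ∈ Finset.univ ∧ 0 < (if IsUnit (s : P) then 0 else d s) := by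
    by_contra hcon
    push_neg at hcon
    have : monWeight S d = 0 := Finset.sum_eq_zero fun s h => Nat.le_zero.mp (hcon s h)
    omega
  have hsu : ¬ IsUnit (s : P) := by
    by_contra h; simp [h] at hs
  have hds : 0 < d s := by
    by_cases h : IsUnit (s : P) <;> simp [h] at hs ⊢; exact hs
  refine hsu (isUnit_of_dvd_one ?_)
  calc (s : P) ∣ (s : P) ^ (d s) := dvd_pow_self _ hds.ne'
    _ ∣ monRep S d := Finset.dvd_prod_of_mem _ (Finset.mem_univ s)
    _ = 1 := hrep1
end

section
/- Let P be a fine and sharp monoid (finitely generated, cancellative, with trivial unit group). Then for every n ∈ ℕ, the complement P \ m_P^n is a finite set. -/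
lemma monPow_mul {P : Type*} [CommMonoid P] {n : ℕ} {x : P} (hx : x ∈ monPow P n) (y : P) :
    x * y ∈ monPow P n := by
  obtain ⟨f, hf, a, rfl⟩ := hx
  exact ⟨f, hf, a * y, mul_right_comm a _ y⟩

lemma prod_mem_monPow {P : Type*} [CommMonoid P] (n : ℕ) (m : Multiset P)
    (hc : n ≤ Multiset.card m) (hm : ∀ y ∈ m, ¬ IsUnit y) : m.prod ∈ monPow P n := by
  induction n generalizing m with
  | zero => exact ⟨Fin.elim0, fun i => i.elim0, m.prod, by simp⟩
  | succ n ih =>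
    have hne : m ≠ 0 := by rintro rfl; simp at hc
    obtain ⟨a, ha⟩ := Multiset.exists_mem_of_ne_zero hne
    obtain ⟨m', rfl⟩ := Multiset.exists_cons_of_mem ha
    obtain ⟨f, hf, b, hb⟩ := ih m' (by simp at hc ⊢; omega) (fun y hy => hm y (by simp [hy]))
    refine ⟨Fin.cons a f, ?_, b, ?_⟩
    · intro i
      refine Fin.cases ?_ ?_ i
      · exact hm a (by simp)
      · intro j; simpa using hf j
    · rw [Fin.prod_univ_succ]
      simp only [Fin.cons_zero, Fin.cons_succ, Multiset.prod_cons, hb]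
      rw [mul_left_comm]

lemma pad_prod {P : Type*} [CommMonoid P] (T : Set P) (h1 : (1 : P) ∈ T) :
    ∀ (n : ℕ) (m : Multiset P), Multiset.card m ≤ n → (∀ y ∈ m, y ∈ T) →
      ∃ f : Fin n → P, (∀ i, f i ∈ T) ∧ m.prod = ∏ i, f i := by
  intro n
  induction n with
  | zero =>
    intro m hc _
    have : m = 0 := by simpa using Multiset.card_eq_zero.mp (Nat.le_zero.mp hc)
    exact ⟨Fin.elim0, fun i => i.elim0, by simp [this]⟩
  | succ n ih =>
    intro m hc hm
    rcases eq_or_ne m 0 with rfl | hne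
    · exact ⟨fun _ => 1, fun _ => h1, by simp⟩
    · obtain ⟨a, ha⟩ := Multiset.exists_mem_of_ne_zero hne
      obtain ⟨m', rfl⟩ := Multiset.exists_cons_of_mem ha
      obtain ⟨f, hf, hprod⟩ := ih m' (by simp at hc ⊢; omega) (fun y hy => hm y (by simp [hy]))
      refine ⟨Fin.cons a f, ?_, ?_⟩
      · intro i
        refine Fin.cases ?_ ?_ i
        · exact hm a (by simp)
        · intro j; simpa using hf j
      · rw [Fin.prod_univ_succ]
        simp [hprod]

/-- For a fine and sharp monoid `P`, the complement `P \ m_P ^ n` is finite for every `n`. -/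
theorem stmt2 {P : Type*} [CancelCommMonoid P] (hfg : Monoid.FG P)
    (hsharp : ∀ x : P, IsUnit x → x = 1) (n : ℕ) :
    ((monPow P n)ᶜ : Set P).Finite := by
  obtain ⟨S, hS⟩ := hfg.fg_top
  set T : Set P := insert 1 (S : Set P) with hT
  have h1T : (1 : P) ∈ T := Set.mem_insert _ _
  have key : ∀ x : P, x ∈ monPow P n ∨
      ∃ m : Multiset P, Multiset.card m < n ∧ (∀ y ∈ m, y ∈ T ∧ ¬ IsUnit y) ∧ x = m.prod := by
    intro x
    have hx : x ∈ Submonoid.closure (S : Set P) := hS ▸ Submonoid.mem_top x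
    induction hx using Submonoid.closure_induction with
    | mem s hs =>
      by_cases hu : IsUnit s
      · rcases Nat.eq_zero_or_pos n with rfl | hn
        · exact Or.inl ⟨Fin.elim0, fun i => i.elim0, s, by simp⟩
        · exact Or.inr ⟨0, hn, by simp, by simp [hsharp s hu]⟩
      · rcases le_or_gt n 1 with h | h
        · left
          have := prod_mem_monPow n {s} (by simpa using h) (by simpa using hu)
          simpa using this
        · refine Or.inr ⟨{s}, by simpa using h, ?_, by simp⟩
          intro y hy
          simp only [Multiset.mem_singleton] at hy
          subst hy
          exact ⟨Set.mem_insert_iff.mpr (Or.inr hs), hu⟩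
    | one =>
      rcases Nat.eq_zero_or_pos n with rfl | hn
      · exact Or.inl ⟨Fin.elim0, fun i => i.elim0, 1, by simp⟩
      · exact Or.inr ⟨0, hn, by simp, by simp⟩
    | mul x y hx hy ihx ihy =>
      rcases ihx with hx' | ⟨m₁, hc₁, hm₁, rfl⟩
      · exact Or.inl (monPow_mul hx' y)
      rcases ihy with hy' | ⟨m₂, hc₂, hm₂, rfl⟩
      · rw [mul_comm]; exact Or.inl (monPow_mul hy' m₁.prod)
      rcases le_or_gt n (Multiset.card (m₁ + m₂)) with h | h
      · left
        rw [← Multiset.prod_add]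
        exact prod_mem_monPow n (m₁ + m₂) h (by
          intro y hy
          rcases Multiset.mem_add.mp hy with h' | h'
          exacts [(hm₁ y h').2, (hm₂ y h').2])
      · exact Or.inr ⟨m₁ + m₂, h, by
          intro y hy
          rcases Multiset.mem_add.mp hy with h' | h'
          exacts [hm₁ y h', hm₂ y h'], (Multiset.prod_add m₁ m₂).symm⟩
  have hsub : ((monPow P n)ᶜ : Set P) ⊆
      (fun f : Fin n → P => ∏ i, f i) '' (Set.pi Set.univ fun _ : Fin n => T) := by
    intro x hx
    rcases key x with h | ⟨m, hc, hm, rfl⟩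
    · exact absurd h hx
    · obtain ⟨f, hf, hprod⟩ := pad_prod T h1T n m hc.le (fun y hy => (hm y hy).1)
      exact ⟨f, fun i _ => hf i, hprod.symm⟩
  exact Set.Finite.subset (Set.Finite.image _ (Set.Finite.pi fun _ =>
    (S.finite_toSet.insert 1))) hsub
end

section
/- Let P be a monoid whose sharp quotient P^♯ = P/P^× is fine. Then the number of elements of m_P \ m_P^2 modulo the translation action of P^× is at least the Krull dimension of P (the maximal length of a chain of prime ideals of P), and equality holds if and only if P^♯ is a free commutative monoid ℕ^r for some r. -/
/-- An ideal of a commutative monoid. -/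
def IsMonIdeal {P : Type*} [CommMonoid P] (I : Set P) : Prop :=
  ∀ x ∈ I, ∀ p : P, p * x ∈ I

/-- A prime ideal of a commutative monoid: an ideal whose complement is a submonoid (face). -/
def IsMonPrime {P : Type*} [CommMonoid P] (I : Set P) : Prop :=
  IsMonIdeal I ∧ (1 : P) ∉ I ∧ ∀ x y : P, x * y ∈ I → x ∈ I ∨ y ∈ I

/-- The Krull dimension of a commutative monoid: the supremum of lengths of chains of prime
ideals. -/
noncomputable def monoidKrullDim (P : Type*) [CommMonoid P] : WithBot ℕ∞ :=
  Order.krullDim {I : Set P // IsMonPrime I}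

section Basic
variable {Q : Type*} [CommMonoid Q]

/-- An atom: a nonunit that is not a product of two nonunits. -/
def MonAtom (x : Q) : Prop := ¬ IsUnit x ∧ ∀ y z : Q, ¬ IsUnit y → ¬ IsUnit z → x ≠ y * z

lemma mem_monPow_two {x : Q} :
    x ∈ monPow Q 2 ↔ ∃ y z : Q, ¬ IsUnit y ∧ ¬ IsUnit z ∧ x = y * z := by
  constructor
  · rintro ⟨f, hf, a, rfl⟩
    refine ⟨a * f 0, f 1, fun h => hf 0 (isUnit_of_mul_isUnit_right h), hf 1, ?_⟩
    rw [Fin.prod_univ_two, ← mul_assoc]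
  · rintro ⟨y, z, hy, hz, rfl⟩
    exact ⟨![y, z], fun i => by fin_cases i <;> simpa, 1, by rw [Fin.prod_univ_two]; simp⟩

lemma atoms_eq : monNonUnits Q \ monPow Q 2 = {x : Q | MonAtom x} := by
  ext x
  simp only [Set.mem_diff, monNonUnits, Set.mem_setOf_eq, MonAtom, mem_monPow_two]
  constructor
  · rintro ⟨h1, h2⟩
    exact ⟨h1, fun y z hy hz hxy => h2 ⟨y, z, hy, hz, hxy⟩⟩
  · rintro ⟨h1, h2⟩
    exact ⟨h1, fun ⟨y, z, hy, hz, hxy⟩ => h2 y z hy hz hxy⟩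

end Basic

section Atomic
variable {Q : Type*} [CommMonoid Q]

lemma isUnit_of_mem_prod {m : Multiset Q} (h : IsUnit m.prod) : ∀ a ∈ m, IsUnit a := by
  induction m using Multiset.induction with
  | empty => simp
  | cons b m ih =>
    rw [Multiset.prod_cons] at h
    intro a ha
    rcases Multiset.mem_cons.1 ha with rfl | ha
    · exact isUnit_of_mul_isUnit_left h
    · exact ih (isUnit_of_mul_isUnit_right h) a ha

variable (hred : ∀ x : Q, IsUnit x → x = 1)
  (hcanc : ∀ a b c : Q, a * b = a * c → b = c)
  (S : Finset Q) (hS : Submonoid.closure (S : Set Q) = ⊤)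

include hS in
lemma exists_rep (x : Q) : ∃ m : Multiset Q, (∀ a ∈ m, a ∈ S) ∧ m.prod = x := by
  have : x ∈ Submonoid.closure (S : Set Q) := by rw [hS]; trivial
  exact Submonoid.exists_multiset_of_mem_closure this

/-- proper divisibility -/
def PDvd (x y : Q) : Prop := ∃ z : Q, ¬ IsUnit z ∧ y = x * z

include hcanc hS in
lemma pdvd_wf : WellFounded (PDvd (Q := Q)) := by
  haveI : IsIrrefl Q (PDvd (Q := Q)) := by
    constructor
    rintro x ⟨z, hz, hx⟩
    have h1 : x * 1 = x * z := by rw [mul_one, ← hx]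
    exact hz ((hcanc _ _ _ h1) ▸ isUnit_one)
  haveI : IsTrans Q (PDvd (Q := Q)) := by
    constructor
    rintro x y z ⟨w, hw, rfl⟩ ⟨w', hw', rfl⟩
    exact ⟨w * w', fun h => hw (isUnit_of_mul_isUnit_left h), by rw [mul_assoc]⟩
  haveI : IsStrictOrder Q (PDvd (Q := Q)) := ⟨⟩
  rw [RelEmbedding.wellFounded_iff_isEmpty]
  constructor
  intro f
  have hrep : ∀ k : ℕ, ∃ m : Multiset Q, (∀ a ∈ m, a ∈ S) ∧ m.prod = f k :=
    fun k => exists_rep S hS (f k)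
  choose m hm hprod using hrep
  classical
  let c : ℕ → (↥S → ℕ) := fun k s => (m k).count s.1
  have hpwo : (Set.univ : Set (↥S → ℕ)).IsPWO := Set.isPWO_of_wellQuasiOrderedLE _
  obtain ⟨k, l, hkl, hle⟩ := hpwo.exists_lt (f := c) (fun _ => trivial)
  have hmle : m k ≤ m l := by
    rw [Multiset.le_iff_count]
    intro a
    by_cases ha : a ∈ S
    · exact hle ⟨a, ha⟩
    · have : a ∉ m k := fun h => ha (hm k a h)
      simp [Multiset.count_eq_zero_of_notMem this]
  have h1 : f l = f k * (m l - m k).prod := by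
    rw [← hprod k, ← hprod l, ← Multiset.prod_add]
    congr 1
    exact (tsub_add_cancel_of_le hmle).symm.trans (add_comm _ _)
  have h2 : ∀ i j : ℕ, i < j → ∃ w : Q, ¬ IsUnit w ∧ f i = f j * w := by
    intro i j hij
    induction j with
    | zero => omega
    | succ j ih =>
      have step : PDvd (f (j + 1)) (f j) := f.map_rel_iff.2 (by omega : j + 1 > j)
      obtain ⟨z, hz, hji⟩ := step
      rcases Nat.lt_succ_iff_lt_or_eq.1 hij with h | h
      · obtain ⟨w, hw, hi⟩ := ih h
        exact ⟨z * w, fun h => hz (isUnit_of_mul_isUnit_left h),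
          by rw [hi, hji, mul_assoc]⟩
      · exact ⟨z, hz, by rw [h, hji]⟩
  obtain ⟨w, hw, h3⟩ := h2 k l hkl
  have h4 : f l * 1 = f l * (w * (m l - m k).prod) := by
    rw [mul_one, ← mul_assoc, ← h3, h1]
  exact hw (IsUnit.of_mul_eq_one _ ((hcanc _ _ _ h4).symm))

include hred hcanc hS in
lemma exists_atoms_rep (x : Q) :
    ∃ m : Multiset Q, (∀ a ∈ m, MonAtom a) ∧ m.prod = x := by
  induction x using (pdvd_wf hcanc S hS).induction with
  | _ x ih =>
    by_cases hu : IsUnit x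
    · exact ⟨0, by simp, by simp [hred x hu]⟩
    by_cases hat : MonAtom x
    · exact ⟨{x}, by simpa, by simp⟩
    · have : ∃ y z : Q, ¬ IsUnit y ∧ ¬ IsUnit z ∧ x = y * z := by
        by_contra h
        push_neg at h
        exact hat ⟨hu, fun y z hy hz hxy => h y z hy hz hxy⟩
      obtain ⟨y, z, hy, hz, rfl⟩ := this
      obtain ⟨my, hmy, hpy⟩ := ih y ⟨z, hz, rfl⟩
      obtain ⟨mz, hmz, hpz⟩ := ih z ⟨y, hy, mul_comm y z⟩
      exact ⟨my + mz, fun a ha => (Multiset.mem_add.1 ha).elim (hmy a) (hmz a),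
        by rw [Multiset.prod_add, hpy, hpz]⟩

include hred in
lemma prod_filter_nonunits [DecidablePred (fun b : Q => ¬ IsUnit b)] (m : Multiset Q) :
    (m.filter (fun b => ¬ IsUnit b)).prod = m.prod := by
  induction m using Multiset.induction with
  | empty => simp
  | cons b m ih =>
    by_cases hb : IsUnit b
    · rw [Multiset.filter_cons_of_neg _ (by simpa using hb), Multiset.prod_cons, hred b hb,
        one_mul, ih]
    · rw [Multiset.filter_cons_of_pos _ (by simpa using hb), Multiset.prod_cons,
        Multiset.prod_cons, ih]

include hred hS in
lemma atom_mem_S {x : Q} (hx : MonAtom x) : x ∈ S := by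
  classical
  obtain ⟨m, hm, hprod⟩ := exists_rep S hS x
  have key : (m.filter (fun b => ¬ IsUnit b)).prod = x := by
    rw [prod_filter_nonunits hred, hprod]
  set m' := m.filter (fun b => ¬ IsUnit b) with hm'
  have hmem : ∀ a ∈ m', a ∈ S := fun a ha => hm a (Multiset.mem_of_mem_filter ha)
  have hnu : ∀ a ∈ m', ¬ IsUnit a := fun a ha => (Multiset.mem_filter.1 ha).2
  by_cases h0 : m'.card = 0
  · rw [Multiset.card_eq_zero] at h0
    rw [h0] at key
    exact absurd (key ▸ isUnit_one) hx.1
  by_cases h1 : m'.card = 1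
  · obtain ⟨b, hb⟩ := Multiset.card_eq_one.1 h1
    rw [hb, Multiset.prod_singleton] at key
    exact key ▸ hmem b (hb ▸ Multiset.mem_singleton_self b)
  · exfalso
    obtain ⟨b, hb⟩ := Multiset.card_pos_iff_exists_mem.1 (Nat.pos_of_ne_zero h0)
    obtain ⟨m'', hbm⟩ := Multiset.exists_cons_of_mem hb
    rw [hbm, Multiset.prod_cons] at key
    refine hx.2 b m''.prod (hnu b hb) ?_ key.symm
    intro hu
    have hcard : 0 < m''.card := by
      have := congrArg Multiset.card hbm
      simp only [Multiset.card_cons] at this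
      omega
    obtain ⟨c, hc⟩ := Multiset.card_pos_iff_exists_mem.1 hcard
    exact hnu c (hbm ▸ Multiset.mem_cons_of_mem hc) (isUnit_of_mem_prod hu c hc)

end Atomic

section Primes
variable {Q : Type*} [CommMonoid Q]

lemma isMonPrime_empty : IsMonPrime (∅ : Set Q) :=
  ⟨fun x hx => absurd hx (Set.notMem_empty x), Set.notMem_empty 1,
    fun x y hxy => absurd hxy (Set.notMem_empty _)⟩

instance primesNonempty : Nonempty {I : Set Q // IsMonPrime I} := ⟨⟨∅, isMonPrime_empty⟩⟩

lemma prime_mem_of_prod_mem {J : Set Q} (hJ : IsMonPrime J) {m : Multiset Q}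
    (h : m.prod ∈ J) : ∃ a ∈ m, a ∈ J := by
  induction m using Multiset.induction with
  | empty => simp only [Multiset.prod_zero] at h; exact absurd h hJ.2.1
  | cons b m ih =>
    rw [Multiset.prod_cons] at h
    rcases hJ.2.2 _ _ h with h | h
    · exact ⟨b, Multiset.mem_cons_self b m, h⟩
    · obtain ⟨a, ha, haJ⟩ := ih h
      exact ⟨a, Multiset.mem_cons_of_mem ha, haJ⟩

lemma prod_mem_ideal {I : Set Q} (hI : IsMonIdeal I) {m : Multiset Q} {a : Q}
    (ha : a ∈ m) (haI : a ∈ I) : m.prod ∈ I := by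
  obtain ⟨m', rfl⟩ := Multiset.exists_cons_of_mem ha
  rw [Multiset.prod_cons, mul_comm]
  exact hI a haI m'.prod

lemma exists_gen_mem_diff {A : Set Q}
    (hgen : ∀ x : Q, ∃ m : Multiset Q, (∀ a ∈ m, a ∈ A) ∧ m.prod = x)
    {I J : Set Q} (hI : IsMonIdeal I) (hJ : IsMonPrime J) {x : Q}
    (hxJ : x ∈ J) (hxI : x ∉ I) : ∃ a ∈ A, a ∈ J ∧ a ∉ I := by
  obtain ⟨m, hm, rfl⟩ := hgen x
  obtain ⟨a, ham, haJ⟩ := prime_mem_of_prod_mem hJ hxJ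
  refine ⟨a, hm a ham, haJ, fun haI => hxI ?_⟩
  exact prod_mem_ideal hI ham haI

lemma length_le_of_gen {A : Set Q}
    (hgen : ∀ x : Q, ∃ m : Multiset Q, (∀ a ∈ m, a ∈ A) ∧ m.prod = x)
    (hA : A.Finite) (p : LTSeries {I : Set Q // IsMonPrime I}) :
    p.length ≤ A.ncard := by
  classical
  have hstep : ∀ i : Fin p.length,
      ∃ a, a ∈ A ∧ a ∈ (p i.succ).1 ∧ a ∉ (p i.castSucc).1 := by
    intro i
    have hlt : (p i.castSucc).1 < (p i.succ).1 := p.step i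
    obtain ⟨x, hxJ, hxI⟩ := Set.exists_of_ssubset hlt
    obtain ⟨a, ha, haJ, haI⟩ := exists_gen_mem_diff hgen (p i.castSucc).2.1 (p i.succ).2 hxJ hxI
    exact ⟨a, ha, haJ, haI⟩
  choose α h1 h2 h3 using hstep
  have key : ∀ i j : Fin p.length, i < j → α i ≠ α j := by
    intro i j hlt heq
    have hle : i.succ ≤ j.castSucc := by
      rw [Fin.le_def]
      rw [Fin.lt_def] at hlt
      simpa using hlt
    have : α i ∈ (p j.castSucc).1 := p.monotone hle (h2 i)
    exact h3 j (heq ▸ this)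
  have hinj : Function.Injective α := by
    intro i j hij
    rcases lt_trichotomy i j with h | h | h
    · exact absurd hij (key i j h)
    · exact h
    · exact absurd hij.symm (key j i h)
  have hcard := Finset.card_le_card_of_injOn (f := α) (s := Finset.univ) (t := hA.toFinset)
    (fun a _ => hA.mem_toFinset.2 (h1 a)) (fun a _ b _ h => hinj h)
  rw [Set.ncard_eq_toFinset_card A hA]
  simpa using hcard

end Primes

section Dim

lemma krullDim_le_nat_iff {α : Type*} [Preorder α] (d : ℕ) :
    Order.krullDim α ≤ (d : WithBot ℕ∞) ↔ ∀ p : LTSeries α, p.length ≤ d := by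
  constructor
  · intro h p
    have := Order.LTSeries.length_le_krullDim p
    have h2 : (p.length : WithBot ℕ∞) ≤ (d : WithBot ℕ∞) := le_trans this h
    exact_mod_cast h2
  · intro h
    exact iSup_le fun p => by exact_mod_cast h p

lemma exists_lt_series_of_krullDim_eq {α : Type*} [Preorder α] [Nonempty α] (d : ℕ)
    (h : Order.krullDim α = (d : WithBot ℕ∞)) : ∃ p : LTSeries α, p.length = d := by
  by_contra h'
  push_neg at h'
  have hub : ∀ p : LTSeries α, p.length ≤ d := (krullDim_le_nat_iff d).1 h.le
  rcases Nat.eq_zero_or_pos d with rfl | hd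
  · exact h' (RelSeries.singleton _ (Classical.arbitrary α)) rfl
  · have hub' : ∀ p : LTSeries α, p.length ≤ d - 1 := by
      intro p
      have h1 := hub p
      have h2 := h' p
      omega
    have : Order.krullDim α ≤ ((d - 1 : ℕ) : WithBot ℕ∞) := (krullDim_le_nat_iff _).2 hub'
    rw [h] at this
    have : d ≤ d - 1 := by exact_mod_cast this
    omega

end Dim

section Free
universe u

lemma cancel_pow {Q : Type u} [CommMonoid Q] (hcanc : ∀ a b c : Q, a * b = a * c → b = c)
    (a : Q) (k : ℕ) {x y : Q} (h : a ^ k * x = a ^ k * y) : x = y := by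
  induction k generalizing x y with
  | zero => simpa using h
  | succ k ih =>
    rw [pow_succ, mul_assoc, mul_assoc] at h
    exact hcanc a x y (ih h)

lemma free_unique (d : ℕ) : ∀ {Q : Type u} [CommMonoid Q]
    (_ : ∀ x : Q, IsUnit x → x = 1)
    (hcanc : ∀ a b c : Q, a * b = a * c → b = c)
    (A : Finset Q) (_ : A.card = d)
    (_ : ∀ x : Q, ∃ m : Multiset Q, (∀ a ∈ m, a ∈ A) ∧ m.prod = x)
    (p : LTSeries {I : Set Q // IsMonPrime I}) (_ : p.length = d)
    (m m' : Multiset Q), (∀ a ∈ m, a ∈ A) → (∀ a ∈ m', a ∈ A) →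
    m.prod = m'.prod → m = m' := by
  induction d with
  | zero =>
    intro Q _ hred hcanc A hcard hgen p hlen m m' hm hm' hprod
    rw [Finset.card_eq_zero] at hcard
    subst hcard
    have h1 : m = 0 := Multiset.eq_zero_of_forall_notMem (fun a ha => by simpa using hm a ha)
    have h2 : m' = 0 := Multiset.eq_zero_of_forall_notMem (fun a ha => by simpa using hm' a ha)
    rw [h1, h2]
  | succ d IH =>
    intro Q _ hred hcanc A hcard hgen p hlen
    classical
    -- the chain as a function on ℕ
    set π : ℕ → Set Q := fun i => (p ⟨min i (d + 1), by omega⟩).1 with hπ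
    have hπprime : ∀ i, IsMonPrime (π i) := fun i => (p ⟨min i (d + 1), by omega⟩).2
    have hπmono : ∀ i j : ℕ, i ≤ j → π i ⊆ π j := by
      intro i j hij
      exact p.monotone (by simp only [Fin.mk_le_mk]; omega)
    have hπlt : ∀ i : ℕ, i ≤ d → π i ⊂ π (i + 1) := by
      intro i hi
      have := p.strictMono (show (⟨min i (d+1), by omega⟩ : Fin (p.length + 1)) <
          ⟨min (i+1) (d+1), by omega⟩ by simp only [Fin.mk_lt_mk]; omega)
      exact this
    -- atoms along the chain
    have hαex : ∀ i : ℕ, ∃ a : Q, i ≤ d → (a ∈ A ∧ a ∈ π (i+1) ∧ a ∉ π i) := by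
      intro i
      by_cases hi : i ≤ d
      · obtain ⟨x, hxJ, hxI⟩ := Set.exists_of_ssubset (hπlt i hi)
        obtain ⟨a, ha, haJ, haI⟩ := exists_gen_mem_diff hgen (hπprime i).1 (hπprime (i+1)) hxJ hxI
        exact ⟨a, fun _ => ⟨ha, haJ, haI⟩⟩
      · exact ⟨1, fun h => absurd h hi⟩
    choose α hαp using hαex
    have hαA : ∀ i : ℕ, i ≤ d → α i ∈ A := fun i hi => (hαp i hi).1
    have hα2 : ∀ i : ℕ, i ≤ d → α i ∈ π (i+1) := fun i hi => (hαp i hi).2.1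
    have hα3 : ∀ i : ℕ, i ≤ d → α i ∉ π i := fun i hi => (hαp i hi).2.2
    have hαne : ∀ i j : ℕ, i ≤ d → j ≤ d → i < j → α i ≠ α j := by
      intro i j hi hj hij heq
      exact hα3 j hj (heq ▸ hπmono (i+1) j hij (hα2 i hi))
    -- the image of α is all of A
    have hβinj : Function.Injective (fun i : Fin (d+1) => α i) := by
      intro i j hij
      rcases lt_trichotomy i j with h | h | h
      · exact absurd hij (hαne i j (by omega) (by omega) h)
      · exact h
      · exact absurd hij.symm (hαne j i (by omega) (by omega) h)
    have himage : Finset.image (fun i : Fin (d+1) => α i) Finset.univ = A := by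
      apply Finset.eq_of_subset_of_card_le
      · intro a ha
        obtain ⟨i, _, rfl⟩ := Finset.mem_image.1 ha
        exact hαA i (by omega)
      · rw [Finset.card_image_of_injective _ hβinj, hcard]
        simp
    have hAform : ∀ a ∈ A, ∃ j : ℕ, j ≤ d ∧ a = α j := by
      intro a ha
      rw [← himage] at ha
      obtain ⟨i, _, rfl⟩ := Finset.mem_image.1 ha
      exact ⟨i, by omega, rfl⟩
    have ha1mem : α 0 ∈ π 1 := hα2 0 (by omega)
    have hAnotin : ∀ a ∈ A, a ≠ α 0 → a ∉ π 1 := by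
      intro a ha hne
      obtain ⟨j, hj, rfl⟩ := hAform a ha
      have hj0 : j ≠ 0 := fun h => hne (by rw [h])
      exact fun hmem => hα3 j hj (hπmono 1 j (by omega) hmem)
    -- the face submonoid
    set Fsub : Submonoid Q :=
      { carrier := {x : Q | x ∉ π 1}
        mul_mem' := by
          intro a b ha hb hab
          rcases (hπprime 1).2.2 a b hab with h | h
          · exact ha h
          · exact hb h
        one_mem' := (hπprime 1).2.1 } with hFsub
    have hmemFsub : ∀ x : Q, x ∈ Fsub ↔ x ∉ π 1 := fun x => Iff.rfl
    have hFred : ∀ x : ↥Fsub, IsUnit x → x = 1 := by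
      intro x hx
      have : IsUnit (x : Q) := hx.map Fsub.subtype
      exact Subtype.ext (hred _ this)
    have hFcanc : ∀ a b c : ↥Fsub, a * b = a * c → b = c := by
      intro a b c h
      apply Subtype.ext
      exact hcanc a.1 b.1 c.1 (by exact_mod_cast congrArg Subtype.val h)
    -- A'
    set A' : Finset ↥Fsub := A.subtype (· ∈ Fsub) with hA'
    have hA'card : A'.card = d := by
      rw [hA', Finset.card_subtype]
      have hneg : A.filter (fun a => ¬ a ∈ Fsub) = {α 0} := by
        ext a
        simp only [Finset.mem_filter, Finset.mem_singleton, hmemFsub, not_not]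
        constructor
        · rintro ⟨ha, hmem⟩
          by_contra hne
          exact hAnotin a ha hne hmem
        · rintro rfl
          exact ⟨hαA 0 (by omega), ha1mem⟩
      have := Finset.card_filter_add_card_filter_not (s := A) (p := (· ∈ Fsub))
      rw [hneg] at this
      simp only [Finset.card_singleton, hcard] at this
      omega
    -- membership of factors in the face
    have hmemF : ∀ m : Multiset Q, m.prod ∈ Fsub → ∀ a ∈ m, a ∈ Fsub := by
      intro m
      induction m using Multiset.induction with
      | empty => intro _ a ha; exact absurd ha (Multiset.notMem_zero a)
      | cons b t ih =>
        intro hprod a ha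
        rw [Multiset.prod_cons] at hprod
        rw [hmemFsub] at hprod
        have hb : b ∉ π 1 := fun h => hprod (by
          have := (hπprime 1).1 b h t.prod
          rwa [mul_comm] at this)
        have ht : t.prod ∉ π 1 := fun h => hprod ((hπprime 1).1 t.prod h b)
        rcases Multiset.mem_cons.1 ha with rfl | ha
        · exact hb
        · exact ih ht a ha
    -- lifting multisets to the face
    have hliftprod : ∀ (m : Multiset Q) (h : ∀ a ∈ m, a ∈ Fsub),
        ((m.attach.map (fun x => (⟨x.1, h x.1 x.2⟩ : ↥Fsub))).prod : Q) = m.prod := by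
      intro m h
      rw [Submonoid.coe_multiset_prod, Multiset.map_map]
      show (Multiset.map (fun x : {a // a ∈ m} => x.1) m.attach).prod = m.prod
      rw [Multiset.attach_map_val]
    have hliftval : ∀ (m : Multiset Q) (h : ∀ a ∈ m, a ∈ Fsub),
        (m.attach.map (fun x => (⟨x.1, h x.1 x.2⟩ : ↥Fsub))).map Subtype.val = m := by
      intro m h
      simp only [Multiset.map_map, Function.comp]
      exact Multiset.attach_map_val m
    -- generation for the face
    have hgenF : ∀ x : ↥Fsub, ∃ mF : Multiset ↥Fsub, (∀ a ∈ mF, a ∈ A') ∧ mF.prod = x := by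
      intro x
      obtain ⟨m, hm, hprod⟩ := hgen x.1
      have hall : ∀ a ∈ m, a ∈ Fsub := hmemF m (hprod ▸ x.2)
      refine ⟨m.attach.map (fun y => ⟨y.1, hall y.1 y.2⟩), ?_, ?_⟩
      · intro a ha
        obtain ⟨y, _, rfl⟩ := Multiset.mem_map.1 ha
        rw [hA', Finset.mem_subtype]
        exact hm y.1 y.2
      · exact Subtype.ext (by rw [hliftprod m hall, hprod])
    -- the chain in the face
    set pF : LTSeries {I : Set ↥Fsub // IsMonPrime I} :=
      { length := d
        toFun := fun i => ⟨{x : ↥Fsub | x.1 ∈ π ((i : ℕ) + 1)},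
          ⟨fun x hx q => by
              simp only [Set.mem_setOf_eq] at hx ⊢
              exact (hπprime _).1 x.1 hx q.1,
            by simpa using (hπprime _).2.1,
            fun x y hxy => (hπprime _).2.2 x.1 y.1 hxy⟩⟩
        step := by
          intro i
          have h1 : ((i.castSucc : Fin (d+1)) : ℕ) = (i : ℕ) := rfl
          have h2 : ((i.succ : Fin (d+1)) : ℕ) = (i : ℕ) + 1 := rfl
          show (_ : {I : Set ↥Fsub // IsMonPrime I}) < _
          rw [lt_iff_le_and_ne]
          constructor
          · intro x hx
            simp only [Set.mem_setOf_eq, h1, h2] at hx ⊢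
            exact hπmono _ _ (by omega) hx
          · intro heq
            have hiq : (i : ℕ) + 1 ≤ d := by omega
            have hmem : α ((i : ℕ) + 1) ∈ Fsub := by
              rw [hmemFsub]
              exact fun h => hα3 _ hiq (hπmono 1 _ (by omega) h)
            have hx1 : (⟨α ((i:ℕ)+1), hmem⟩ : ↥Fsub) ∈
                ({x : ↥Fsub | x.1 ∈ π ((i : ℕ) + 2)} : Set ↥Fsub) := by
              simp only [Set.mem_setOf_eq]
              exact hα2 _ hiq
            have hx2 : (⟨α ((i:ℕ)+1), hmem⟩ : ↥Fsub) ∉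
                ({x : ↥Fsub | x.1 ∈ π ((i : ℕ) + 1)} : Set ↥Fsub) := by
              simp only [Set.mem_setOf_eq]
              exact hα3 _ hiq
            have := congrArg Subtype.val heq
            simp only [h1, h2] at this
            rw [show (i:ℕ) + 1 + 1 = (i:ℕ) + 2 from rfl] at this
            exact hx2 (this ▸ hx1) } with hpF
    have hIH := IH hFred hFcanc A' hA'card hgenF pF rfl
    -- main counting argument
    intro m m' hm hm' hprod
    set a₁ := α 0 with ha₁
    have hdecomp : ∀ t : Multiset Q, Multiset.replicate (t.count a₁) a₁
        + t.filter (fun a => ¬ a = a₁) = t := by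
      intro t
      ext b
      by_cases hb : b = a₁
      · subst hb
        simp [Multiset.count_replicate, Multiset.count_filter]
      · simp only [Multiset.count_add, Multiset.count_replicate, Multiset.count_filter]
        rw [if_neg (fun h : a₁ = b => hb h.symm), if_pos hb, zero_add]
    have hfmem : ∀ (t : Multiset Q), (∀ a ∈ t, a ∈ A) →
        ∀ a ∈ t.filter (fun a => ¬ a = a₁), a ∈ Fsub := by
      intro t ht a ha
      rw [Multiset.mem_filter] at ha
      rw [hmemFsub]
      exact hAnotin a (ht a ha.1) ha.2
    have hfprodmem : ∀ (t : Multiset Q), (∀ a ∈ t, a ∈ A) →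
        (t.filter (fun a => ¬ a = a₁)).prod ∈ Fsub :=
      fun t ht => Submonoid.multiset_prod_mem _ _ (hfmem t ht)
    -- counts are equal
    have hcount : ∀ t t' : Multiset Q, (∀ a ∈ t, a ∈ A) → (∀ a ∈ t', a ∈ A) →
        t.prod = t'.prod → t.count a₁ ≤ t'.count a₁ := by
      intro t t' ht ht' hpp
      by_contra hlt
      push_neg at hlt
      set c := t.count a₁
      set c' := t'.count a₁
      have h1 : a₁ ^ c * (t.filter (fun a => ¬ a = a₁)).prod
          = a₁ ^ c' * (t'.filter (fun a => ¬ a = a₁)).prod := by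
        rw [← Multiset.prod_replicate, ← Multiset.prod_replicate, ← Multiset.prod_add,
          ← Multiset.prod_add, hdecomp t, hdecomp t', hpp]
      obtain ⟨k, hk⟩ : ∃ k, c = c' + (k + 1) := ⟨c - c' - 1, by omega⟩
      rw [hk, pow_add, mul_assoc] at h1
      have h2 : a₁ ^ (k+1) * (t.filter (fun a => ¬ a = a₁)).prod
          = (t'.filter (fun a => ¬ a = a₁)).prod := cancel_pow hcanc a₁ c' h1
      have h3 : a₁ ^ (k+1) * (t.filter (fun a => ¬ a = a₁)).prod ∈ π 1 := by
        rw [pow_succ, mul_assoc, mul_comm a₁, ← mul_assoc]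
        exact (hπprime 1).1 a₁ ha1mem _
      rw [h2] at h3
      exact (hfprodmem t' ht') h3
    have hceq : m.count a₁ = m'.count a₁ :=
      le_antisymm (hcount m m' hm hm' hprod) (hcount m' m hm' hm hprod.symm)
    -- cancel and use the inductive hypothesis
    have h1 : a₁ ^ (m.count a₁) * (m.filter (fun a => ¬ a = a₁)).prod
        = a₁ ^ (m.count a₁) * (m'.filter (fun a => ¬ a = a₁)).prod := by
      conv_rhs => rw [hceq]
      rw [← Multiset.prod_replicate, ← Multiset.prod_replicate, ← Multiset.prod_add,
        ← Multiset.prod_add, hdecomp m, hdecomp m', hprod]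
    have h2 : (m.filter (fun a => ¬ a = a₁)).prod = (m'.filter (fun a => ¬ a = a₁)).prod :=
      cancel_pow hcanc a₁ _ h1
    -- lift to F
    have hmf := hfmem m hm
    have hmf' := hfmem m' hm'
    have hA'mem : ∀ (t : Multiset Q) (ht : ∀ a ∈ t, a ∈ A)
        (a : ↥Fsub), a ∈ (t.filter (fun a => ¬ a = a₁)).attach.map
          (fun x => (⟨x.1, hfmem t ht x.1 x.2⟩ : ↥Fsub)) → a ∈ A' := by
      intro t ht a ha
      obtain ⟨y, _, rfl⟩ := Multiset.mem_map.1 ha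
      rw [hA', Finset.mem_subtype]
      exact ht y.1 (Multiset.mem_of_mem_filter y.2)
    have heqF := hIH
      ((m.filter (fun a => ¬ a = a₁)).attach.map (fun x => ⟨x.1, hmf x.1 x.2⟩))
      ((m'.filter (fun a => ¬ a = a₁)).attach.map (fun x => ⟨x.1, hmf' x.1 x.2⟩))
      (hA'mem m hm) (hA'mem m' hm')
      (Subtype.ext (by rw [hliftprod _ hmf, hliftprod _ hmf', h2]))
    have hfeq : m.filter (fun a => ¬ a = a₁) = m'.filter (fun a => ¬ a = a₁) := by
      have := congrArg (Multiset.map Subtype.val) heqF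
      rwa [hliftval _ hmf, hliftval _ hmf'] at this
    rw [← hdecomp m, ← hdecomp m', hceq, hfeq]

end Free

section EquivFree
universe u
variable {Q : Type u} [CommMonoid Q]

lemma equiv_free (A : Finset Q)
    (hgen : ∀ x : Q, ∃ m : Multiset Q, (∀ a ∈ m, a ∈ A) ∧ m.prod = x)
    (huniq : ∀ m m' : Multiset Q, (∀ a ∈ m, a ∈ A) → (∀ a ∈ m', a ∈ A) →
      m.prod = m'.prod → m = m') :
    Nonempty (Q ≃* Multiplicative (Fin A.card →₀ ℕ)) := by
  classical
  set e : Fin A.card ≃ ↥A := A.equivFin.symm with he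
  set h : Fin A.card → Q := fun i => (e i : Q) with hh
  have hinj : Function.Injective h := fun i j hij => e.injective (Subtype.ext hij)
  set F : (Fin A.card →₀ ℕ) → Multiset Q := fun f => f.toMultiset.map h with hF
  have FmemA : ∀ f a, a ∈ F f → a ∈ A := by
    intro f a ha
    obtain ⟨i, _, rfl⟩ := Multiset.mem_map.1 ha
    exact (e i).2
  have Fadd : ∀ f g, F (f + g) = F f + F g := by
    intro f g
    rw [hF]
    simp only [Finsupp.toMultiset_add, Multiset.map_add]
  have Finj : Function.Injective F := by
    intro f g hfg
    have hmm : Finsupp.toMultiset f = Finsupp.toMultiset g := Multiset.map_injective hinj hfg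
    rw [← Finsupp.toMultiset_toFinsupp f, hmm, Finsupp.toMultiset_toFinsupp]
  have Fsurj : ∀ m : Multiset Q, (∀ a ∈ m, a ∈ A) → ∃ f, F f = m := by
    intro m hm
    set t : Multiset (Fin A.card) := m.attach.map (fun x => e.symm ⟨x.1, hm x.1 x.2⟩) with ht
    refine ⟨t.toFinsupp, ?_⟩
    rw [hF]
    simp only [Multiset.toFinsupp_toMultiset]
    rw [ht, Multiset.map_map]
    have : (h ∘ fun x : {a // a ∈ m} => e.symm ⟨x.1, hm x.1 x.2⟩) = fun x => x.1 := by
      funext x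
      simp only [Function.comp_apply, hh]
      rw [Equiv.apply_symm_apply]
    rw [this, Multiset.attach_map_val]
  set ψ : (Fin A.card →₀ ℕ) → Q := fun f => (F f).prod with hψ
  have ψinj : Function.Injective ψ := by
    intro f g hfg
    exact Finj (huniq (F f) (F g) (FmemA f) (FmemA g) hfg)
  have ψsurj : Function.Surjective ψ := by
    intro x
    obtain ⟨m, hm, hprod⟩ := hgen x
    obtain ⟨f, hf⟩ := Fsurj m hm
    exact ⟨f, by rw [hψ]; simp only [hf, hprod]⟩
  have ψmul : ∀ f g, ψ (f + g) = ψ f * ψ g := by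
    intro f g
    rw [hψ]
    simp only [Fadd, Multiset.prod_add]
  set E : (Fin A.card →₀ ℕ) ≃ Q := Equiv.ofBijective ψ ⟨ψinj, ψsurj⟩ with hE
  refine ⟨MulEquiv.symm ⟨⟨fun f => ψ f.toAdd, fun x => Multiplicative.ofAdd (E.symm x),
    ?_, ?_⟩, ?_⟩⟩
  · intro f
    show Multiplicative.ofAdd (E.symm (ψ f.toAdd)) = f
    have : ψ f.toAdd = E f.toAdd := rfl
    rw [this, Equiv.symm_apply_apply]
    rfl
  · intro x
    show ψ (Multiplicative.ofAdd (E.symm x)).toAdd = x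
    have : ψ (Multiplicative.ofAdd (E.symm x)).toAdd = E (E.symm x) := rfl
    rw [this, Equiv.apply_symm_apply]
  · intro f g
    show ψ (f * g).toAdd = ψ f.toAdd * ψ g.toAdd
    have : (f * g).toAdd = f.toAdd + g.toAdd := rfl
    rw [this, ψmul]

end EquivFree

section FreeMonoid
variable (r : ℕ)

local notation "N" => Multiplicative (Fin r →₀ ℕ)

lemma Nred : ∀ x : N, IsUnit x → x = 1 := by
  intro x hx
  obtain ⟨y, hy⟩ := hx.exists_right_inv
  have hadd : x.toAdd + y.toAdd = 0 := hy
  have hx0 : x.toAdd = 0 := by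
    ext i
    have := congrFun (congrArg (fun f : Fin r →₀ ℕ => (f : Fin r → ℕ)) hadd) i
    simp only [Finsupp.coe_add, Pi.add_apply, Finsupp.coe_zero, Pi.zero_apply] at this
    simpa using Nat.eq_zero_of_add_eq_zero_right this
  have := congrArg Multiplicative.ofAdd hx0
  simpa using this

lemma Ncanc : ∀ a b c : N, a * b = a * c → b = c := by
  intro a b c h
  have hadd : a.toAdd + b.toAdd = a.toAdd + c.toAdd := congrArg Multiplicative.toAdd h
  have : b.toAdd = c.toAdd := by
    ext i
    have := congrFun (congrArg (fun f : Fin r →₀ ℕ => (f : Fin r → ℕ)) hadd) i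
    simp only [Finsupp.coe_add, Pi.add_apply] at this
    omega
  exact congrArg Multiplicative.ofAdd this

noncomputable def NS : Finset N :=
  Finset.image (fun i : Fin r => Multiplicative.ofAdd (Finsupp.single i 1)) Finset.univ

lemma NS_closure : Submonoid.closure ((NS r : Finset N) : Set N) = ⊤ := by
  rw [eq_top_iff]
  intro x _
  have : ∀ f : Fin r →₀ ℕ, Multiplicative.ofAdd f ∈ Submonoid.closure ((NS r : Finset N) : Set N) := by
    intro f
    induction f using Finsupp.induction with
    | zero =>
      exact Submonoid.one_mem _
    | single_add i b f _ _ ih =>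
      have h1 : Multiplicative.ofAdd (Finsupp.single i b + f)
          = Multiplicative.ofAdd (Finsupp.single i 1) ^ b * Multiplicative.ofAdd f := by
        rw [← ofAdd_nsmul, Finsupp.smul_single, smul_eq_mul, mul_one]
        rfl
      rw [h1]
      exact Submonoid.mul_mem _ (Submonoid.pow_mem _ (Submonoid.subset_closure (by
        simp [NS])) b) ih
  simpa using this x.toAdd

lemma Nnonunit_iff (x : N) : ¬ IsUnit x ↔ x.toAdd ≠ 0 := by
  constructor
  · intro h h0
    exact h (by
      have := congrArg Multiplicative.ofAdd h0
      simp only [ofAdd_toAdd, ofAdd_zero] at this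
      rw [this]; exact isUnit_one)
  · intro h hu
    have := Nred r x hu
    exact h (by rw [this]; rfl)

lemma Natom_iff (x : N) : MonAtom x ↔ ∃ i : Fin r, x = Multiplicative.ofAdd (Finsupp.single i 1) := by
  have hsingle_ne : ∀ i : Fin r, (Finsupp.single i 1 : Fin r →₀ ℕ) ≠ 0 := by
    intro i h
    have := congrFun (congrArg (fun f : Fin r →₀ ℕ => (f : Fin r → ℕ)) h) i
    simp at this
  constructor
  · rintro ⟨h1, h2⟩
    have hf : x.toAdd ≠ 0 := (Nnonunit_iff r x).1 h1
    obtain ⟨i, hi⟩ := Finsupp.support_nonempty_iff.2 hf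
    have hival : 1 ≤ x.toAdd i := Nat.one_le_iff_ne_zero.2 (Finsupp.mem_support_iff.1 hi)
    set g : Fin r →₀ ℕ := Finsupp.single i 1 with hg
    set h : Fin r →₀ ℕ := x.toAdd - g with hh
    have hsplit : x.toAdd = g + h := by
      ext j
      by_cases hj : j = i
      · subst hj
        simp only [hh, hg, Finsupp.coe_add, Pi.add_apply, Finsupp.coe_tsub, Pi.sub_apply,
          Finsupp.single_eq_same]
        omega
      · simp only [hh, hg, Finsupp.coe_add, Pi.add_apply, Finsupp.coe_tsub, Pi.sub_apply,
          Finsupp.single_eq_of_ne' (fun hx : i = j => hj hx.symm)]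
        omega
    by_cases hzero : h = 0
    · refine ⟨i, ?_⟩
      have : x.toAdd = g := by rw [hsplit, hzero, add_zero]
      have := congrArg Multiplicative.ofAdd this
      simpa using this
    · exfalso
      have hgne : (Multiplicative.ofAdd g : N) ≠ 1 := by
        intro hone
        have : g = 0 := by
          have := congrArg Multiplicative.toAdd hone
          simpa using this
        exact hsingle_ne i (hg ▸ this)
      have hxeq : x = (Multiplicative.ofAdd g) * (Multiplicative.ofAdd h) := by
        have := congrArg Multiplicative.ofAdd hsplit
        simpa using this
      refine h2 (Multiplicative.ofAdd g) (Multiplicative.ofAdd h) ?_ ?_ hxeq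
      · rw [Nnonunit_iff]
        simpa using fun hx => hgne (by rw [hx]; rfl)
      · rw [Nnonunit_iff]
        simpa using hzero
  · rintro ⟨i, rfl⟩
    constructor
    · rw [Nnonunit_iff]
      simpa using hsingle_ne i
    · intro y z hy hz heq
      have hadd : Finsupp.single i 1 = y.toAdd + z.toAdd := congrArg Multiplicative.toAdd heq
      have hyi : y.toAdd i + z.toAdd i = 1 := by
        have := congrFun (congrArg (fun f : Fin r →₀ ℕ => (f : Fin r → ℕ)) hadd) i
        simp only [Finsupp.coe_add, Pi.add_apply, Finsupp.single_eq_same] at this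
        omega
      have hoff : ∀ j, j ≠ i → y.toAdd j = 0 ∧ z.toAdd j = 0 := by
        intro j hj
        have := congrFun (congrArg (fun f : Fin r →₀ ℕ => (f : Fin r → ℕ)) hadd) j
        simp only [Finsupp.coe_add, Pi.add_apply,
          Finsupp.single_eq_of_ne' (Ne.symm hj)] at this
        omega
      rcases Nat.eq_zero_or_pos (y.toAdd i) with hy0 | hy0
      · apply (Nnonunit_iff r y).1 hy
        ext j
        by_cases hj : j = i
        · subst hj; simpa using hy0
        · simpa using (hoff j hj).1
      · apply (Nnonunit_iff r z).1 hz
        ext j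
        by_cases hj : j = i
        · subst hj; simp; omega
        · simpa using (hoff j hj).2

lemma Natoms_ncard : ({x : N | MonAtom x}).ncard = r := by
  have hrange : {x : N | MonAtom x}
      = Set.range (fun i : Fin r => (Multiplicative.ofAdd (Finsupp.single i 1) : N)) := by
    ext x
    simp only [Set.mem_setOf_eq, Set.mem_range, Natom_iff r x]
    exact ⟨fun ⟨i, h⟩ => ⟨i, h.symm⟩, fun ⟨i, h⟩ => ⟨i, h.symm⟩⟩
  have hinj : Function.Injective
      (fun i : Fin r => (Multiplicative.ofAdd (Finsupp.single i 1) : N)) := by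
    intro i j hij
    have : (Finsupp.single i 1 : Fin r →₀ ℕ) = Finsupp.single j 1 :=
      congrArg Multiplicative.toAdd hij
    by_contra hne
    have := congrFun (congrArg (fun f : Fin r →₀ ℕ => (f : Fin r → ℕ)) this) i
    simp [Finsupp.single_eq_same, Finsupp.single_eq_of_ne' (Ne.symm hne)] at this
  rw [hrange, ← Set.image_univ, Set.ncard_image_of_injective _ hinj, Set.ncard_univ]
  simp

noncomputable def Nchain : LTSeries {I : Set N // IsMonPrime I} where
  length := r
  toFun := fun k => ⟨{f : N | ∃ j : Fin r, (j : ℕ) < (k : ℕ) ∧ f.toAdd j ≠ 0},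
    by
      refine ⟨?_, ?_, ?_⟩
      · rintro x ⟨j, hj, hx⟩ p
        refine ⟨j, hj, ?_⟩
        show (p * x).toAdd j ≠ 0
        have : (p * x).toAdd j = p.toAdd j + x.toAdd j := by rw [toAdd_mul, Finsupp.add_apply]
        omega
      · rintro ⟨j, hj, hx⟩
        exact hx (by simp [toAdd_one])
      · rintro x y ⟨j, hj, hxy⟩
        have : (x * y).toAdd j = x.toAdd j + y.toAdd j := by rw [toAdd_mul, Finsupp.add_apply]
        rw [this] at hxy
        rcases Nat.eq_zero_or_pos (x.toAdd j) with h | h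
        · exact Or.inr ⟨j, hj, by omega⟩
        · exact Or.inl ⟨j, hj, by omega⟩⟩
  step := by
    intro i
    show (_ : {I : Set N // IsMonPrime I}) < _
    rw [lt_iff_le_and_ne]
    constructor
    · rintro x ⟨j, hj, hx⟩
      refine ⟨j, ?_, hx⟩
      simp only [Fin.coe_castSucc, Fin.val_succ] at hj ⊢
      omega
    · intro heq
      have h1 : ((i.castSucc : Fin (r+1)) : ℕ) = (i : ℕ) := rfl
      have h2 : ((i.succ : Fin (r+1)) : ℕ) = (i : ℕ) + 1 := rfl
      have hi : (i : ℕ) < r := i.2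
      set w : N := Multiplicative.ofAdd (Finsupp.single (⟨(i : ℕ), hi⟩ : Fin r) 1) with hw
      have hmem : w ∈ ({f : N | ∃ j : Fin r, (j : ℕ) < ((i.succ : Fin (r+1)) : ℕ)
          ∧ f.toAdd j ≠ 0} : Set N) := by
        refine ⟨⟨(i : ℕ), hi⟩, ?_, ?_⟩
        · simp only [Fin.val_succ]
          omega
        · simp [hw]
      have hnmem : w ∉ ({f : N | ∃ j : Fin r, (j : ℕ) < ((i.castSucc : Fin (r+1)) : ℕ)
          ∧ f.toAdd j ≠ 0} : Set N) := by
        rintro ⟨j, hj, hx⟩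
        rw [h1] at hj
        apply hx
        show (Finsupp.single (⟨(i : ℕ), hi⟩ : Fin r) 1 : Fin r →₀ ℕ) j = 0
        rw [Finsupp.single_eq_of_ne']
        intro hcontra
        have : ((⟨(i : ℕ), hi⟩ : Fin r) : ℕ) = (j : ℕ) := by rw [hcontra]
        simp at this
        omega
      have hset : ({f : N | ∃ j : Fin r, (j : ℕ) < ((i.castSucc : Fin (r+1)) : ℕ)
          ∧ f.toAdd j ≠ 0} : Set N) = {f : N | ∃ j : Fin r, (j : ℕ) < ((i.succ : Fin (r+1)) : ℕ)
          ∧ f.toAdd j ≠ 0} := congrArg Subtype.val heq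
      rw [hset] at hnmem
      exact hnmem hmem

lemma NkrullDim : monoidKrullDim N = (r : WithBot ℕ∞) := by
  apply le_antisymm
  · apply (krullDim_le_nat_iff (α := {I : Set N // IsMonPrime I}) r).2
    intro p
    have hbound := length_le_of_gen (A := {x : N | MonAtom x})
      (fun x => exists_atoms_rep (Nred r) (Ncanc r) (NS r) (NS_closure r) x)
      (Set.Finite.subset (NS r).finite_toSet
        (fun x hx => atom_mem_S (Nred r) (NS r) (NS_closure r) hx)) p
    rw [Natoms_ncard r] at hbound
    exact hbound
  · have h := Order.LTSeries.length_le_krullDim (Nchain r)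
    have hlen : (Nchain r).length = r := rfl
    rw [hlen] at h
    exact h

end FreeMonoid

section Transport
universe u v
variable {Q : Type u} {R : Type v} [CommMonoid Q] [CommMonoid R]

lemma prime_comap (f : R →* Q) {I : Set Q} (hI : IsMonPrime I) :
    IsMonPrime ((fun x => f x) ⁻¹' I) := by
  refine ⟨?_, ?_, ?_⟩
  · intro x hx p
    show f (p * x) ∈ I
    rw [map_mul]
    exact hI.1 (f x) hx (f p)
  · show f 1 ∉ I
    rw [map_one]
    exact hI.2.1
  · intro x y hxy
    have : f x * f y ∈ I := by rw [← map_mul]; exact hxy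
    exact hI.2.2 (f x) (f y) this

noncomputable def primesOrderIso (e : Q ≃* R) :
    {I : Set Q // IsMonPrime I} ≃o {J : Set R // IsMonPrime J} where
  toFun := fun I => ⟨(fun x => e.symm x) ⁻¹' I.1, prime_comap e.symm.toMonoidHom I.2⟩
  invFun := fun J => ⟨(fun x => e x) ⁻¹' J.1, prime_comap e.toMonoidHom J.2⟩
  left_inv := by
    intro I
    apply Subtype.ext
    ext x
    simp
  right_inv := by
    intro J
    apply Subtype.ext
    ext x
    simp
  map_rel_iff' := by
    intro I₁ I₂
    constructor
    · intro h x hx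
      have : e x ∈ (fun y => e.symm y) ⁻¹' I₁.1 := by simpa using hx
      have := h this
      simpa using this
    · intro h x hx
      exact h hx

lemma monoidKrullDim_congr (e : Q ≃* R) : monoidKrullDim Q = monoidKrullDim R :=
  Order.krullDim_eq_of_orderIso (primesOrderIso e)

lemma monAtom_map (e : Q ≃* R) {x : Q} (hx : MonAtom x) : MonAtom (e x) := by
  constructor
  · intro hu
    apply hx.1
    have : IsUnit (e.symm (e x)) := hu.map e.symm.toMonoidHom
    simpa using this
  · intro y z hy hz heq
    have h1 : x = e.symm y * e.symm z := by
      have := congrArg e.symm heq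
      simpa [map_mul] using this
    refine hx.2 (e.symm y) (e.symm z) ?_ ?_ h1
    · intro hu
      apply hy
      have : IsUnit (e (e.symm y)) := hu.map e.toMonoidHom
      simpa using this
    · intro hu
      apply hz
      have : IsUnit (e (e.symm z)) := hu.map e.toMonoidHom
      simpa using this

lemma atoms_image (e : Q ≃* R) : {y : R | MonAtom y} = e '' {x : Q | MonAtom x} := by
  ext y
  constructor
  · intro hy
    refine ⟨e.symm y, monAtom_map e.symm hy, by simp⟩
  · rintro ⟨x, hx, rfl⟩
    exact monAtom_map e hx

lemma atoms_ncard_congr (e : Q ≃* R) :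
    ({x : Q | MonAtom x}).ncard = ({y : R | MonAtom y}).ncard := by
  rw [atoms_image e, Set.ncard_image_of_injective _ e.injective]

end Transport

section Main
universe u
variable {Q : Type u} [CommMonoid Q]

lemma main_lemma (hred : ∀ x : Q, IsUnit x → x = 1)
    (hcanc : ∀ a b c : Q, a * b = a * c → b = c)
    (S : Finset Q) (hS : Submonoid.closure (S : Set Q) = ⊤) :
    monoidKrullDim Q ≤ (({x : Q | MonAtom x}).ncard : WithBot ℕ∞) ∧
    (monoidKrullDim Q = (({x : Q | MonAtom x}).ncard : WithBot ℕ∞) ↔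
      ∃ r : ℕ, Nonempty (Q ≃* Multiplicative (Fin r →₀ ℕ))) := by
  classical
  have hAfin : ({x : Q | MonAtom x}).Finite :=
    Set.Finite.subset S.finite_toSet (fun x hx => atom_mem_S hred S hS hx)
  have hgen : ∀ x : Q, ∃ m : Multiset Q, (∀ a ∈ m, a ∈ {x : Q | MonAtom x}) ∧ m.prod = x :=
    fun x => exists_atoms_rep hred hcanc S hS x
  have hle : monoidKrullDim Q ≤ (({x : Q | MonAtom x}).ncard : WithBot ℕ∞) := by
    apply (krullDim_le_nat_iff (α := {I : Set Q // IsMonPrime I}) _).2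
    intro p
    exact length_le_of_gen hgen hAfin p
  refine ⟨hle, ?_, ?_⟩
  · intro heq
    set A : Finset Q := hAfin.toFinset with hA
    have hcardA : A.card = ({x : Q | MonAtom x}).ncard :=
      (Set.ncard_eq_toFinset_card _ hAfin).symm
    have hgenA : ∀ x : Q, ∃ m : Multiset Q, (∀ a ∈ m, a ∈ A) ∧ m.prod = x := by
      intro x
      obtain ⟨m, hm, hprod⟩ := hgen x
      exact ⟨m, fun a ha => hAfin.mem_toFinset.2 (hm a ha), hprod⟩
    obtain ⟨p, hp⟩ := exists_lt_series_of_krullDim_eq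
      (α := {I : Set Q // IsMonPrime I}) _ heq
    have huniq := free_unique A.card hred hcanc A rfl hgenA p (by rw [hp, hcardA])
    exact ⟨A.card, equiv_free A hgenA huniq⟩
  · rintro ⟨r, ⟨e⟩⟩
    rw [monoidKrullDim_congr e, atoms_ncard_congr e, NkrullDim r, Natoms_ncard r]

end Main

section Reduction
variable {P : Type*} [CommMonoid P]

lemma assoc_saturated {I : Set P} (hI : IsMonIdeal I) {x y : P}
    (h : Associates.mk y = Associates.mk x) (hy : y ∈ I) : x ∈ I := by
  obtain ⟨u, hu⟩ := Associates.mk_eq_mk_iff_associated.1 h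
  have : x = ↑u * y := by rw [← hu, mul_comm]
  rw [this]
  exact hI y hy u

lemma assoc_prime_image {I : Set P} (hI : IsMonPrime I) :
    IsMonPrime (Associates.mk '' I) := by
  refine ⟨?_, ?_, ?_⟩
  · rintro x ⟨a, ha, rfl⟩ q
    obtain ⟨p, rfl⟩ := Associates.mk_surjective q
    exact ⟨p * a, hI.1 a ha p, (Associates.mk_mul_mk).symm⟩
  · rintro ⟨a, ha, h1⟩
    have : IsUnit a := Associates.mk_eq_one.1 h1
    obtain ⟨u, rfl⟩ := this
    have : (1 : P) = ↑u⁻¹ * ↑u := by simp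
    exact hI.2.1 (this ▸ hI.1 _ ha _)
  · intro x y hxy
    obtain ⟨a, rfl⟩ := Associates.mk_surjective x
    obtain ⟨b, rfl⟩ := Associates.mk_surjective y
    obtain ⟨c, hc, hcc⟩ := hxy
    rw [Associates.mk_mul_mk] at hcc
    have : a * b ∈ I := assoc_saturated hI.1 hcc hc
    rcases hI.2.2 a b this with h | h
    · exact Or.inl ⟨a, h, rfl⟩
    · exact Or.inr ⟨b, h, rfl⟩

noncomputable def assocPrimesIso :
    {I : Set P // IsMonPrime I} ≃o {J : Set (Associates P) // IsMonPrime J} where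
  toFun := fun I => ⟨Associates.mk '' I.1, assoc_prime_image I.2⟩
  invFun := fun J => ⟨(fun x => Associates.mk x) ⁻¹' J.1, prime_comap Associates.mkMonoidHom J.2⟩
  left_inv := by
    intro I
    apply Subtype.ext
    ext x
    constructor
    · rintro ⟨y, hy, hxy⟩
      exact assoc_saturated I.2.1 hxy hy
    · intro hx
      exact ⟨x, hx, rfl⟩
  right_inv := by
    intro J
    apply Subtype.ext
    exact Set.image_preimage_eq J.1 Associates.mk_surjective
  map_rel_iff' := by
    intro I₁ I₂
    constructor
    · intro h x hx
      obtain ⟨y, hy, hxy⟩ := h ⟨x, hx, rfl⟩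
      exact assoc_saturated I₂.2.1 hxy hy
    · intro h x hx
      obtain ⟨y, hy, rfl⟩ := hx
      exact ⟨y, h hy, rfl⟩

lemma assoc_isUnit_mk {x : P} : IsUnit (Associates.mk x) ↔ IsUnit x := by
  rw [Associates.isUnit_iff_eq_one, Associates.mk_eq_one]

lemma assoc_atoms_image :
    Associates.mk '' (monNonUnits P \ monPow P 2)
      = monNonUnits (Associates P) \ monPow (Associates P) 2 := by
  ext q
  constructor
  · rintro ⟨x, ⟨hxu, hx2⟩, rfl⟩
    constructor
    · exact fun h => hxu (assoc_isUnit_mk.1 h)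
    · intro h
      rcases mem_monPow_two.1 h with ⟨y, z, hy, hz, hyz⟩
      obtain ⟨a, rfl⟩ := Associates.mk_surjective y
      obtain ⟨b, rfl⟩ := Associates.mk_surjective z
      rw [Associates.mk_mul_mk] at hyz
      obtain ⟨u, hu⟩ := Associates.mk_eq_mk_iff_associated.1 hyz
      apply hx2
      apply mem_monPow_two.2
      have h1 : x = a * b * ↑u⁻¹ := by
        rw [← hu, mul_assoc]
        simp
      refine ⟨a, b * ↑u⁻¹, fun h => hy (assoc_isUnit_mk.2 h), ?_, ?_⟩
      · intro h
        exact hz (assoc_isUnit_mk.2 (isUnit_of_mul_isUnit_left h))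
      · rw [h1, mul_assoc]
  · rintro ⟨hqu, hq2⟩
    obtain ⟨x, rfl⟩ := Associates.mk_surjective q
    refine ⟨x, ⟨fun h => hqu (assoc_isUnit_mk.2 h), ?_⟩, rfl⟩
    intro h
    rcases mem_monPow_two.1 h with ⟨y, z, hy, hz, rfl⟩
    apply hq2
    apply mem_monPow_two.2
    exact ⟨Associates.mk y, Associates.mk z, fun h => hy (assoc_isUnit_mk.1 h),
      fun h => hz (assoc_isUnit_mk.1 h), (Associates.mk_mul_mk).symm⟩

end Reduction

/-- If `P^♯ = P/P^×` is fine, then the number of elements of `m_P \ m_P²` modulo the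
translation action of `P^×` (equivalently, the cardinality of its image in `Associates P`)
is at least `dim P`, with equality iff `P^♯` is a free commutative monoid. -/
theorem stmt3 {P : Type*} [CommMonoid P]
    (hcancel : ∀ a b c : Associates P, a * b = a * c → b = c)
    (hfg : Monoid.FG (Associates P)) :
    monoidKrullDim P ≤ ((Associates.mk '' (monNonUnits P \ monPow P 2)).ncard : WithBot ℕ∞) ∧
    (monoidKrullDim P = ((Associates.mk '' (monNonUnits P \ monPow P 2)).ncard : WithBot ℕ∞) ↔
      ∃ r : ℕ, Nonempty (Associates P ≃* Multiplicative (Fin r →₀ ℕ))) := by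
  obtain ⟨S, hS⟩ := hfg.fg_top
  have hQred : ∀ x : Associates P, IsUnit x → x = 1 :=
    fun x hx => (Associates.isUnit_iff_eq_one x).1 hx
  have hmain := main_lemma hQred hcancel S hS
  have hdim : monoidKrullDim P = monoidKrullDim (Associates P) :=
    Order.krullDim_eq_of_orderIso (assocPrimesIso (P := P))
  have hset : Associates.mk '' (monNonUnits P \ monPow P 2)
      = {x : Associates P | MonAtom x} := by
    rw [assoc_atoms_image, atoms_eq]
  rw [hdim, hset]
  exact hmain
end

section
/- Let P be a fine and sharp monoid, A a noetherian local ring, and α: P → (A, ·) a local morphism of monoids (i.e. α^{-1}(A^×) = {1}). Then dim A ≤ dim(A / m_P A) + dim P, where m_P A denotes the ideal of A generated by α(m_P). -/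
set_option linter.unusedVariables false
set_option linter.unusedSectionVars false

open IsLocalRing

section Art

variable {R : Type*} [CommRing R]

/-- If the action of `R` on `N` factors through a quotient field-ish `K` with surjection,
artinian-ness transfers back. -/
theorem myIsArtinian_of_surjective_tower {K N : Type*} [CommRing K] [AddCommGroup N]
    [Module R N] [Module K N] [Algebra R K] [IsScalarTower R K N]
    (hsurj : Function.Surjective (algebraMap R K)) (h : IsArtinian K N) : IsArtinian R N := by
  let f : Submodule R N ↪o Submodule K N :=
    { toFun := fun W =>
        { carrier := W
          add_mem' := fun ha hb => W.add_mem ha hb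
          zero_mem' := W.zero_mem
          smul_mem' := by
            intro k x hx
            obtain ⟨r, rfl⟩ := hsurj k
            rw [algebraMap_smul]
            exact W.smul_mem r hx }
      inj' := by
        intro W W' hWW'
        ext x
        exact SetLike.ext_iff.mp hWW' x
      map_rel_iff' := Iff.rfl }
  exact (isArtinian_iff _ _).mpr (f.wellFounded ((isArtinian_iff _ _).mp h))

theorem myArtOfNilpotent [IsNoetherianRing R] (M : Ideal R) (hM : M.IsMaximal) :
    ∀ (k : ℕ) (Q : Type*) (_ : AddCommGroup Q) (_ : Module R Q) (_ : Module.Finite R Q),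
      (∀ a ∈ M ^ k, ∀ q : Q, a • q = 0) → IsArtinian R Q := by
  intro k
  induction k with
  | zero =>
    intro Q _ _ _ h
    have : Subsingleton Q := by
      constructor
      intro a b
      have ha := h 1 (by simp) a
      have hb := h 1 (by simp) b
      rw [one_smul] at ha hb
      rw [ha, hb]
    exact isArtinian_of_finite
  | succ k ih =>
    intro Q _ _ _ h
    set N : Submodule R Q := (M ^ k) • ⊤ with hN
    -- Q ⧸ N is artinian by induction
    have hQN : IsArtinian R (Q ⧸ N) := by
      refine ih (Q ⧸ N) inferInstance inferInstance inferInstance ?_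
      intro a ha q
      obtain ⟨x, rfl⟩ := Submodule.Quotient.mk_surjective N q
      rw [← Submodule.Quotient.mk_smul, Submodule.Quotient.mk_eq_zero]
      exact Submodule.smul_mem_smul ha trivial
    -- N is artinian: it is a finite dimensional vector space over R ⧸ M
    have hNart : IsArtinian R N := by
      have htor : Module.IsTorsionBySet R N (M : Set R) := by
        intro x a
        have : (a : R) • (x : Q) = 0 := by
          have hmem : (a : R) • (x : Q) ∈ (M ^ (k+1) : Ideal R) • (⊤ : Submodule R Q) := by
            rw [pow_succ, mul_comm, mul_smul]
            exact Submodule.smul_mem_smul a.2 x.2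
          have : (M ^ (k+1) : Ideal R) • (⊤ : Submodule R Q) ≤ ⊥ := by
            rw [Submodule.smul_le]
            intro r hr n _
            exact (Submodule.mem_bot R).mpr (h r hr n)
          simpa using this hmem
        exact Subtype.ext (by simpa using this)
      letI : Module (R ⧸ M) N := htor.module
      haveI : IsScalarTower R (R ⧸ M) N := htor.isScalarTower
      haveI : IsArtinianRing (R ⧸ M) := by
        letI := Ideal.Quotient.field M
        infer_instance
      haveI : Module.Finite R N := by
        have : IsNoetherian R Q := isNoetherian_of_isNoetherianRing_of_finite R Q
        exact Module.Finite.iff_fg.mpr (IsNoetherian.noetherian N)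
      haveI : Module.Finite (R ⧸ M) N :=
        Module.Finite.of_restrictScalars_finite R (R ⧸ M) N
      haveI : IsArtinian (R ⧸ M) N := isArtinian_of_fg_of_artinian'
      exact myIsArtinian_of_surjective_tower Ideal.Quotient.mk_surjective this
    exact isArtinian_of_range_eq_ker N.subtype N.mkQ
      (by rw [Submodule.range_subtype, Submodule.ker_mkQ])

end Art


section Lloc

open IsLocalRing

set_option maxHeartbeats 1000000 in
theorem myLlocal {S : Type*} [CommRing S] [IsNoetherianRing S] [IsLocalRing S]
    (p q : Ideal S) (hp : p.IsPrime) (hq : q.IsPrime) (y : S)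
    (hyM : y ∈ maximalIdeal S)
    (hprimes : ∀ w : Ideal S, w.IsPrime → p ⊔ Ideal.span {y} ≤ w → w = maximalIdeal S)
    (hyq : y ∉ q) (hpq : p < q) : False := by
  haveI := hq
  set M := maximalIdeal S with hMdef
  set K : Ideal S := p ⊔ Ideal.span {y} with hKdef
  -- the radical of K is M
  have hKM : K ≤ M := by
    apply sup_le (le_maximalIdeal hp.ne_top)
    rw [Ideal.span_le, Set.singleton_subset_iff]
    exact hyM
  have hradM : M ≤ K.radical := by
    intro x hx
    rw [Ideal.radical_eq_sInf, Submodule.mem_sInf]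
    intro J hJ
    exact (hprimes J hJ.2 hJ.1) ▸ hx
  obtain ⟨k, hk⟩ : ∃ k : ℕ, M ^ k ≤ K :=
    Ideal.exists_pow_le_of_le_radical_of_fg hradM (IsNoetherian.noetherian M)
  -- S ⧸ K is an artinian module
  haveI hart : IsArtinian S (S ⧸ K) := by
    refine myArtOfNilpotent M (maximalIdeal.isMaximal S) k (S ⧸ K)
      inferInstance inferInstance inferInstance ?_
    intro a ha z
    obtain ⟨b, rfl⟩ := Submodule.Quotient.mk_surjective K z
    rw [← Submodule.Quotient.mk_smul, Submodule.Quotient.mk_eq_zero]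
    rw [smul_eq_mul]
    exact Ideal.mul_mem_right b K (hk ha)
  -- localization at q and symbolic-type powers
  set L := Localization.AtPrime q with hLdef
  haveI : IsNoetherianRing L := IsLocalization.isNoetherianRing q.primeCompl L ‹_›
  set f := algebraMap S L with hfdef
  set T : ℕ → Ideal S := fun n => (Ideal.map f (q ^ n ⊔ p)).comap f with hTdef
  have Tanti : ∀ n, T (n + 1) ≤ T n := by
    intro n
    exact Ideal.comap_mono (Ideal.map_mono (sup_le_sup_right (Ideal.pow_le_pow_right n.le_succ) p))
  have hpT : ∀ n, p ≤ T n := fun n =>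
    le_trans le_sup_right (Ideal.le_comap_map)
  have hqT : ∀ n, q ^ n ≤ T n := fun n =>
    le_trans le_sup_left (Ideal.le_comap_map)
  have Tsat : ∀ n (c : S), c * y ∈ T n → c ∈ T n := by
    intro n c hc
    have hyu : IsUnit (f y) := IsLocalization.map_units L ⟨y, show y ∈ q.primeCompl from hyq⟩
    obtain ⟨u, hu⟩ := hyu
    have : f c * ↑u ∈ Ideal.map f (q ^ n ⊔ p) := by
      rw [hu, ← map_mul]
      exact hc
    have h2 : f c * ↑u * ↑u⁻¹ ∈ Ideal.map f (q ^ n ⊔ p) :=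
      Ideal.mul_mem_right _ _ this
    rwa [mul_assoc, u.mul_inv, mul_one] at h2
  -- stabilization
  set C : ℕ →o (Submodule S (S ⧸ K))ᵒᵈ :=
    ⟨fun n => Submodule.map K.mkQ (T n), by
      intro a b hab
      exact Submodule.map_mono (by
        induction b, hab using Nat.le_induction with
        | base => exact le_refl _
        | succ b hb ih => exact le_trans (Tanti b) ih)⟩ with hCdef
  obtain ⟨n₀, hn₀⟩ := IsArtinian.monotone_stabilizes C
  set n := n₀ + 1 with hndef
  have hstab : Submodule.map K.mkQ (T n) = Submodule.map K.mkQ (T (n + 1)) := by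
    have h1 := hn₀ n n₀.le_succ
    have h2 := hn₀ (n + 1) (le_trans n₀.le_succ n.le_succ)
    exact h1.symm.trans h2
  have hsup : K ⊔ T n = K ⊔ T (n + 1) := by
    have := congrArg (Submodule.comap K.mkQ) hstab
    rwa [Submodule.comap_map_mkQ, Submodule.comap_map_mkQ] at this
  -- key inclusion
  have key : T n ≤ T (n + 1) ⊔ M • T n := by
    intro a ha
    have h1 : a ∈ K ⊔ T n := Submodule.mem_sup_right ha
    rw [hsup] at h1
    have h2 : a ∈ Ideal.span {y} ⊔ T (n + 1) := by
      refine (sup_le (sup_le (le_trans (hpT (n + 1)) le_sup_right) le_sup_left) le_sup_right) h1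
    obtain ⟨s, hs, b, hb, hsb⟩ := Submodule.mem_sup.mp h2
    obtain ⟨c, hcy⟩ := Ideal.mem_span_singleton'.mp hs
    have hcyTn : c * y ∈ T n := by
      have : c * y = a - b := by rw [hcy, ← hsb]; ring
      rw [this]
      exact Submodule.sub_mem _ ha (Tanti n hb)
    have hcTn : c ∈ T n := Tsat n c hcyTn
    apply Submodule.mem_sup.mpr
    refine ⟨b, hb, y * c, Submodule.smul_mem_smul hyM hcTn, by rw [← hsb, ← hcy]; ring⟩
  -- Nakayama in S ⧸ T (n+1)
  have hTeq : T n = T (n + 1) := by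
    apply le_antisymm _ (Tanti n)
    set N' := Submodule.map (T (n + 1)).mkQ (T n) with hN'def
    have hle : N' ≤ M • N' := by
      calc N' ≤ Submodule.map (T (n + 1)).mkQ (T (n + 1) ⊔ M • T n) := Submodule.map_mono key
        _ = Submodule.map (T (n + 1)).mkQ (T (n + 1)) ⊔
            M • Submodule.map (T (n + 1)).mkQ (T n) := by
              rw [Submodule.map_sup, Submodule.map_smul'']
        _ ≤ M • N' := by
              apply sup_le _ le_rfl
              intro z hz
              obtain ⟨w, hw, rfl⟩ := hz
              rw [show (T (n+1)).mkQ w = 0 from (Submodule.Quotient.mk_eq_zero _).mpr hw]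
              exact Submodule.zero_mem _
    have hjac : M ≤ Ideal.jacobson ⊥ := (IsLocalRing.jacobson_eq_maximalIdeal ⊥ bot_ne_top).ge
    have hbot : N' = ⊥ :=
      Submodule.eq_bot_of_le_smul_of_le_jacobson_bot M N' (IsNoetherian.noetherian N') hle hjac
    intro a ha
    have : (T (n + 1)).mkQ a ∈ N' := ⟨a, ha, rfl⟩
    rw [hbot, Submodule.mem_bot] at this
    rwa [← Submodule.Quotient.mk_eq_zero (T (n + 1))]
  -- push to L
  have hmapeq : Ideal.map f (q ^ n ⊔ p) = Ideal.map f (q ^ (n + 1) ⊔ p) := by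
    have := congrArg (Ideal.map f) hTeq
    rwa [IsLocalization.map_comap q.primeCompl L, IsLocalization.map_comap q.primeCompl L] at this
  set mq := Ideal.map f q with hmqdef
  set mp := Ideal.map f p with hmpdef
  have hml : mq ^ n ⊔ mp = mq ^ (n + 1) ⊔ mp := by
    rw [hmqdef, hmpdef, ← Ideal.map_pow, ← Ideal.map_pow, ← Ideal.map_sup, ← Ideal.map_sup]
    exact hmapeq
  -- Nakayama in L ⧸ mp
  have hmqn : mq ^ n ≤ mp := by
    haveI : IsLocalRing L := Localization.AtPrime.isLocalRing q
    have hmapbot : Submodule.map mp.mkQ mp ≤ ⊥ := by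
      intro z hz
      obtain ⟨w, hw, rfl⟩ := hz
      rw [show mp.mkQ w = 0 from (Submodule.Quotient.mk_eq_zero _).mpr hw]
      exact Submodule.zero_mem _
    have hpow : mq ^ (n + 1) = mq • mq ^ n := by
      rw [Ideal.smul_eq_mul, pow_succ, mul_comm]
    have hXle : Submodule.map mp.mkQ (mq ^ n) ≤ mq • Submodule.map mp.mkQ (mq ^ n) := by
      calc Submodule.map mp.mkQ (mq ^ n)
          ≤ Submodule.map mp.mkQ (mq ^ n ⊔ mp) := Submodule.map_mono le_sup_left
        _ = Submodule.map mp.mkQ (mq ^ (n + 1) ⊔ mp) := by rw [hml]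
        _ = Submodule.map mp.mkQ (mq ^ (n + 1)) ⊔ Submodule.map mp.mkQ mp := Submodule.map_sup _ _ _
        _ ≤ Submodule.map mp.mkQ (mq ^ (n + 1)) := sup_le le_rfl (hmapbot.trans bot_le)
        _ = mq • Submodule.map mp.mkQ (mq ^ n) := by rw [hpow, Submodule.map_smul'']
    have hjacL : mq ≤ Ideal.jacobson ⊥ := by
      rw [IsLocalRing.jacobson_eq_maximalIdeal ⊥ bot_ne_top]
      rw [hmqdef, hfdef, Localization.AtPrime.map_eq_maximalIdeal]
    have hbot : Submodule.map mp.mkQ (mq ^ n) = ⊥ :=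
      Submodule.eq_bot_of_le_smul_of_le_jacobson_bot mq _ (IsNoetherian.noetherian _) hXle hjacL
    intro a ha
    have : mp.mkQ a ∈ Submodule.map mp.mkQ (mq ^ n) := ⟨a, ha, rfl⟩
    rw [hbot, Submodule.mem_bot] at this
    rwa [← Submodule.Quotient.mk_eq_zero mp]
  -- conclude
  have hdisjp : Disjoint (q.primeCompl : Set S) (p : Set S) :=
    Set.disjoint_left.mpr fun x hx hxp => hx (hpq.le hxp)
  have hdisjq : Disjoint (q.primeCompl : Set S) (q : Set S) :=
    Set.disjoint_left.mpr fun x hx hxq => hx hxq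
  have hmp_prime : mp.IsPrime :=
    IsLocalization.isPrime_of_isPrime_disjoint q.primeCompl L p hp hdisjp
  have hmq_le_mp : mq ≤ mp := by
    calc mq ≤ mq.radical := Ideal.le_radical
      _ = (mq ^ n).radical := (Ideal.radical_pow (I := mq) (Nat.succ_ne_zero n₀)).symm
      _ ≤ mp.radical := Ideal.radical_mono hmqn
      _ = mp := hmp_prime.radical
  have hqp : q ≤ p := by
    have h1 : Ideal.comap f mq = q :=
      IsLocalization.comap_map_of_isPrime_disjoint q.primeCompl L hq hdisjq
    have h2 : Ideal.comap f mp = p :=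
      IsLocalization.comap_map_of_isPrime_disjoint q.primeCompl L hp hdisjp
    rw [← h1, ← h2]
    exact Ideal.comap_mono hmq_le_mp
  exact hpq.not_ge hqp

end Lloc


/-- Krull's "in-between" lemma: given primes `p < q < r` and `x ∈ r`, there is a prime
between `p` and `r` containing `x`. -/
theorem myLemmaL {R : Type*} [CommRing R] [IsNoetherianRing R]
    (p q r : Ideal R) (hp : p.IsPrime) (hq : q.IsPrime) (hr : r.IsPrime)
    (hpq : p < q) (hqr : q < r) (x : R) (hx : x ∈ r) :
    ∃ q' : Ideal R, q'.IsPrime ∧ x ∈ q' ∧ p < q' ∧ q' < r := by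
  by_cases hxq : x ∈ q
  · exact ⟨q, hq, hxq, hpq, hqr⟩
  have hxp : x ∉ p := fun h => hxq (hpq.le h)
  haveI := hr
  set L := Localization.AtPrime r with hLdef
  haveI : IsNoetherianRing L := IsLocalization.isNoetherianRing r.primeCompl L ‹_›
  set f := algebraMap R L with hfdef
  set y := f x with hydef
  have hple : p ≤ r := hpq.le.trans hqr.le
  have hdisjp : Disjoint (r.primeCompl : Set R) (p : Set R) :=
    Set.disjoint_left.mpr fun z hz hzI => hz (hple hzI)
  have hdisjq : Disjoint (r.primeCompl : Set R) (q : Set R) :=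
    Set.disjoint_left.mpr fun z hz hzI => hz (hqr.le hzI)
  have hp' : (Ideal.map f p).IsPrime :=
    IsLocalization.isPrime_of_isPrime_disjoint r.primeCompl L p hp hdisjp
  have hq' : (Ideal.map f q).IsPrime :=
    IsLocalization.isPrime_of_isPrime_disjoint r.primeCompl L q hq hdisjq
  have hcomp : Ideal.comap f (Ideal.map f p) = p :=
    IsLocalization.comap_map_of_isPrime_disjoint r.primeCompl L hp hdisjp
  have hcomq : Ideal.comap f (Ideal.map f q) = q :=
    IsLocalization.comap_map_of_isPrime_disjoint r.primeCompl L hq hdisjq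
  by_cases hcase : ∀ w : Ideal L, w.IsPrime → Ideal.map f p ⊔ Ideal.span {y} ≤ w →
      w = maximalIdeal L
  · exfalso
    refine myLlocal (Ideal.map f p) (Ideal.map f q) hp' hq' y ?_ hcase ?_ ?_
    · rw [← Localization.AtPrime.map_eq_maximalIdeal]
      exact Ideal.mem_map_of_mem f hx
    · intro hy
      have hxmem : x ∈ Ideal.comap f (Ideal.map f q) := hy
      rw [hcomq] at hxmem
      exact hxq hxmem
    · exact lt_of_le_of_ne (Ideal.map_mono hpq.le)
        (fun heq => hpq.ne (by rw [← hcomp, heq, hcomq]))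
  · push_neg at hcase
    obtain ⟨w, hw, hle, hne⟩ := hcase
    haveI := hw
    have hyw : y ∈ w := hle (Ideal.mem_sup_right (Ideal.subset_span rfl))
    refine ⟨Ideal.comap f w, Ideal.IsPrime.comap f, hyw, ?_, ?_⟩
    · refine lt_of_le_of_ne ?_ fun heq => hxp (heq ▸ hyw)
      calc p = Ideal.comap f (Ideal.map f p) := hcomp.symm
        _ ≤ Ideal.comap f w := Ideal.comap_mono (le_sup_left.trans hle)
    · refine lt_of_le_of_ne ?_ fun heq => hne ?_
      · calc Ideal.comap f w ≤ Ideal.comap f (maximalIdeal L) :=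
            Ideal.comap_mono (le_maximalIdeal hw.ne_top)
          _ = r := Localization.AtPrime.comap_maximalIdeal
      · have h2 := congrArg (Ideal.map f) heq
        rwa [IsLocalization.map_comap r.primeCompl L w,
          Localization.AtPrime.map_eq_maximalIdeal] at h2


/-- Straightening: from a chain of primes of length `n ≥ 1` whose top contains `x`, produce a
chain of length `n - 1` whose members all contain `x`, with the same top, and whose bottom
contains the old bottom. -/
theorem myStraighten {R : Type*} [CommRing R] [IsNoetherianRing R] (x : R) :
    ∀ (n : ℕ), ∀ c : LTSeries (PrimeSpectrum R), c.length = n → 1 ≤ n →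
      x ∈ c.last.asIdeal →
      ∃ d : LTSeries (PrimeSpectrum R), d.length = n - 1 ∧ d.last = c.last ∧
        c.head.asIdeal ≤ d.head.asIdeal ∧ ∀ p ∈ d, x ∈ p.asIdeal := by
  intro n
  induction n using Nat.strong_induction_on with
  | _ n ih =>
    intro c hlen hn hx
    rcases eq_or_lt_of_le hn with h1 | h2
    · -- n = 1
      refine ⟨RelSeries.singleton _ c.last, by simp [← h1], by rw [RelSeries.last_singleton], ?_, ?_⟩
      · rw [RelSeries.head_singleton]
        exact (PrimeSpectrum.asIdeal_le_asIdeal _ _).mpr c.head_le_last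
      · intro p hp
        obtain ⟨i, rfl⟩ := hp
        have : (RelSeries.singleton {(a, b) : PrimeSpectrum R × PrimeSpectrum R | a < b} c.last) i = c.last := rfl
        rw [this]
        exact hx
    · -- n ≥ 2
      have hlen' : c.eraseLast.length = n - 1 := by
        rw [RelSeries.eraseLast_length, hlen]
      have herl : c.eraseLast.last < c.last :=
        c.eraseLast_last_rel_last (by omega)
      by_cases hx2 : x ∈ c.eraseLast.last.asIdeal
      · obtain ⟨d', hd'len, hd'last, hd'head, hd'mem⟩ :=
          ih (n - 1) (by omega) c.eraseLast hlen' (by omega) hx2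
        refine ⟨d'.snoc c.last (hd'last ▸ herl), by simp [hd'len]; omega, RelSeries.last_snoc _ _ _,
          ?_, ?_⟩
        · rw [RelSeries.head_snoc]
          exact hd'head.trans' (by rw [RelSeries.head_eraseLast])
        · intro p hp
          rcases (RelSeries.mem_snoc).mp hp with h | rfl
          · exact hd'mem p h
          · exact hx
      · -- need to fix the second-to-last element
        have hlen'' : c.eraseLast.eraseLast.length = n - 2 := by
          rw [RelSeries.eraseLast_length, RelSeries.eraseLast_length, hlen]
          omega
        have hAB : c.eraseLast.eraseLast.last < c.eraseLast.last :=
          c.eraseLast.eraseLast_last_rel_last (by omega)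
        set A := c.eraseLast.eraseLast.last with hA
        set B := c.eraseLast.last with hB
        set Ct := c.last with hCt
        obtain ⟨q', hq'prime, hxq', hAq', hq'C⟩ :=
          myLemmaL A.asIdeal B.asIdeal Ct.asIdeal A.2 B.2 Ct.2
            ((PrimeSpectrum.asIdeal_lt_asIdeal _ _).mpr hAB)
            ((PrimeSpectrum.asIdeal_lt_asIdeal _ _).mpr herl) x hx
        set Q : PrimeSpectrum R := ⟨q', hq'prime⟩ with hQ
        have hAQ : A < Q := (PrimeSpectrum.asIdeal_lt_asIdeal A Q).mp hAq'
        have hQC : Q < Ct := (PrimeSpectrum.asIdeal_lt_asIdeal Q Ct).mp hq'C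
        set e := (c.eraseLast.eraseLast).snoc Q hAQ with he
        have helen : e.length = n - 1 := by
          rw [he]; simp [hlen'']; omega
        have helast : e.last = Q := RelSeries.last_snoc _ _ _
        obtain ⟨d', hd'len, hd'last, hd'head, hd'mem⟩ :=
          ih (n - 1) (by omega) e helen (by omega) (by rw [helast]; exact hxq')
        refine ⟨d'.snoc c.last (by rw [hd'last, helast]; exact hQC), by simp [hd'len]; omega,
          RelSeries.last_snoc _ _ _, ?_, ?_⟩
        · rw [RelSeries.head_snoc]
          refine hd'head.trans' ?_
          rw [he, RelSeries.head_snoc, RelSeries.head_eraseLast, RelSeries.head_eraseLast]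
        · intro p hp
          rcases (RelSeries.mem_snoc).mp hp with h | rfl
          · exact hd'mem p h
          · exact hx


section Monoid

variable {P : Type*} [CommMonoid P] {A : Type*} [CommRing A]

theorem myMonPrime_subset_nonUnits {I : Set P} (hI : IsMonPrime I) : I ⊆ monNonUnits P := by
  intro z hz hu
  obtain ⟨u, rfl⟩ := hu
  exact hI.2.1 (by simpa using hI.1 _ hz ((u⁻¹ : Pˣ) : P))

theorem myNonUnits_isMonPrime : IsMonPrime (monNonUnits P) := by
  refine ⟨fun x hx p hpx => hx (isUnit_of_mul_isUnit_right hpx), by simp [monNonUnits], ?_⟩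
  intro x y hxy
  by_contra hc
  push_neg at hc
  simp only [monNonUnits, Set.mem_setOf_eq, not_not] at hc
  exact hxy (hc.1.mul hc.2)

/-- The pullback of a prime of `A` along `α` is a monoid prime of `P`. -/
def myPre (α : P →* A) (q : PrimeSpectrum A) : {I : Set P // IsMonPrime I} :=
  ⟨{z | α z ∈ q.asIdeal}, by
    refine ⟨fun x hx p => ?_, fun h1 => q.2.ne_top (Ideal.eq_top_iff_one _ |>.mpr (by
      simpa using h1)), fun x y hxy => ?_⟩
    · simp only [Set.mem_setOf_eq, map_mul]
      exact Ideal.mul_mem_left _ _ hx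
    · simp only [Set.mem_setOf_eq, map_mul] at hxy
      exact q.2.mem_or_mem hxy⟩

theorem myPre_mono (α : P →* A) {q q' : PrimeSpectrum A} (h : q ≤ q') :
    myPre α q ≤ myPre α q' := fun z hz => h hz

theorem myPre_subset_nonUnits (α : P →* A) (hloc : ∀ p : P, IsUnit (α p) → IsUnit p)
    (q : PrimeSpectrum A) : (myPre α q).1 ⊆ monNonUnits P := by
  intro z hz hu
  exact q.2.ne_top (Ideal.eq_top_of_isUnit_mem _ hz (hu.map α))

theorem mySpan_le_iff (α : P →* A) (hloc : ∀ p : P, IsUnit (α p) → IsUnit p)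
    (q : PrimeSpectrum A) :
    Ideal.span (α '' monNonUnits P) ≤ q.asIdeal ↔ (myPre α q).1 = monNonUnits P := by
  constructor
  · intro h
    refine Set.Subset.antisymm (myPre_subset_nonUnits α hloc q) fun z hz => ?_
    exact h (Ideal.subset_span (Set.mem_image_of_mem α hz))
  · intro h
    rw [Ideal.span_le]
    rintro _ ⟨z, hz, rfl⟩
    rw [← h] at hz
    exact hz

end Monoid

section Main

variable {A : Type*} [CommRing A] [IsNoetherianRing A] {P : Type*} [CommMonoid P]

/-- helper: mapping a prime containing `J` to the quotient -/
def myQuot (J : Ideal A) (p : PrimeSpectrum A) (h : J ≤ p.asIdeal) : PrimeSpectrum (A ⧸ J) :=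
  ⟨Ideal.map (Ideal.Quotient.mk J) p.asIdeal,
    haveI := p.2
    Ideal.map_isPrime_of_surjective Ideal.Quotient.mk_surjective (by rwa [Ideal.mk_ker])⟩

theorem myQuot_strictMono (J : Ideal A) (p p' : PrimeSpectrum A) (h : J ≤ p.asIdeal)
    (h' : J ≤ p'.asIdeal) (hlt : p < p') : myQuot J p h < myQuot J p' h' := by
  rw [← PrimeSpectrum.asIdeal_lt_asIdeal]
  refine lt_of_le_of_ne (Ideal.map_mono (le_of_lt ((PrimeSpectrum.asIdeal_lt_asIdeal _ _).mpr hlt)))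
    fun heq => ?_
  simp only [myQuot] at heq
  have h1 := congrArg (Ideal.comap (Ideal.Quotient.mk J)) heq
  rw [Ideal.comap_map_of_surjective _ Ideal.Quotient.mk_surjective,
    Ideal.comap_map_of_surjective _ Ideal.Quotient.mk_surjective] at h1
  rw [← RingHom.ker_eq_comap_bot, Ideal.mk_ker] at h1
  rw [sup_eq_left.mpr h, sup_eq_left.mpr h'] at h1
  exact ((PrimeSpectrum.asIdeal_lt_asIdeal _ _).mpr hlt).ne h1

theorem myChainInQuot (J : Ideal A) (c : LTSeries (PrimeSpectrum A)) (h : J ≤ c.head.asIdeal) :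
    (c.length : WithBot ℕ∞) ≤ ringKrullDim (A ⧸ J) := by
  have hall : ∀ i : Fin (c.length + 1), J ≤ (c i).asIdeal := by
    intro i
    refine h.trans ?_
    exact (PrimeSpectrum.asIdeal_le_asIdeal _ _).mpr (c.monotone (Fin.zero_le i))
  let d : LTSeries (PrimeSpectrum (A ⧸ J)) :=
    ⟨c.length, fun i => myQuot J (c i) (hall i), fun i =>
      myQuot_strictMono J _ _ _ _ (c.step i)⟩
  exact Order.LTSeries.length_le_krullDim d

theorem myMain (α : P →* A) (hloc : ∀ p : P, IsUnit (α p) → IsUnit p) :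
    ∀ (n : ℕ) (c : LTSeries (PrimeSpectrum A)) (t : ℕ), c.length = n →
      Ideal.span (α '' monNonUnits P) ≤ c.last.asIdeal →
      (∀ mc : LTSeries {I : Set P // IsMonPrime I}, mc.head = myPre α c.head → mc.length ≤ t) →
      (c.length : WithBot ℕ∞) ≤
        ringKrullDim (A ⧸ Ideal.span (α '' monNonUnits P)) + t := by
  classical
  set J := Ideal.span (α '' monNonUnits P) with hJdef
  intro n
  induction n using Nat.strong_induction_on with
  | _ n ih =>
    intro c t hlen hlast hmon
    by_cases hhead : J ≤ c.head.asIdeal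
    · -- the whole chain is in V(J)
      refine (myChainInQuot J c hhead).trans ?_
      have h0t : (0 : WithBot ℕ∞) ≤ (t : WithBot ℕ∞) := by
        exact_mod_cast Nat.zero_le t
      calc ringKrullDim (A ⧸ J) = ringKrullDim (A ⧸ J) + 0 := by rw [add_zero]
        _ ≤ ringKrullDim (A ⧸ J) + (t : WithBot ℕ∞) := add_le_add_right h0t _
    · -- find the minimal index whose ideal contains J
      have hex : ∃ k : ℕ, ∃ hk : k ≤ c.length, J ≤ (c ⟨k, Nat.lt_succ_of_le hk⟩).asIdeal :=
        ⟨c.length, le_rfl, hlast⟩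
      set j := Nat.find hex with hjdef
      obtain ⟨hjle, hjJ⟩ := Nat.find_spec hex
      have hj0 : j ≠ 0 := by
        intro h0
        apply hhead
        have : c.head = c ⟨j, Nat.lt_succ_of_le hjle⟩ := by
          rw [RelSeries.head]
          congr 1
          exact Fin.ext (by simp [h0])
        rw [this]
        exact hjJ
      have hjm : ¬ J ≤ (c ⟨j - 1, Nat.lt_succ_of_le (le_trans (Nat.sub_le j 1) hjle)⟩).asIdeal := by
        intro hcon
        exact Nat.find_min hex (Nat.sub_lt (Nat.pos_of_ne_zero hj0) one_pos)
          ⟨le_trans (Nat.sub_le j 1) hjle, hcon⟩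
      -- choose y
      have hy : ∃ y ∈ monNonUnits P,
          α y ∉ (c ⟨j - 1, Nat.lt_succ_of_le (le_trans (Nat.sub_le j 1) hjle)⟩).asIdeal := by
        by_contra hcon
        push_neg at hcon
        apply hjm
        rw [hJdef, Ideal.span_le]
        rintro _ ⟨z, hz, rfl⟩
        exact hcon z hz
      obtain ⟨y, hynu, hynotin⟩ := hy
      set x := α y with hxdef
      have hxJ : x ∈ J := Ideal.subset_span (Set.mem_image_of_mem α hynu)
      -- t ≥ 1
      have ht1 : 1 ≤ t := by
        have hchain2 : ∃ mc : LTSeries {I : Set P // IsMonPrime I},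
            mc.head = myPre α c.head ∧ mc.length = 1 := by
          have hlt : myPre α c.head < ⟨monNonUnits P, myNonUnits_isMonPrime⟩ := by
            refine lt_of_le_of_ne (myPre_subset_nonUnits α hloc c.head) fun heq => ?_
            apply hhead
            rw [mySpan_le_iff α hloc]
            exact congrArg Subtype.val heq
          exact ⟨(RelSeries.singleton _ (myPre α c.head)).snoc _
            (by rw [RelSeries.last_singleton]; exact hlt), by
              rw [RelSeries.head_snoc, RelSeries.head_singleton], by simp⟩
        obtain ⟨mc, hmc1, hmc2⟩ := hchain2
        have := hmon mc hmc1
        omega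
      -- straighten the prefix
      set pre := c.take ⟨j, Nat.lt_succ_of_le hjle⟩ with hpredef
      have hprelen : pre.length = j := by simp [hpredef]
      have hprelast : pre.last = c ⟨j, Nat.lt_succ_of_le hjle⟩ := RelSeries.last_take _ _
      have hxpre : x ∈ pre.last.asIdeal := by rw [hprelast]; exact hjJ hxJ
      obtain ⟨d, hdlen, hdlast, hdhead, hdmem⟩ :=
        myStraighten x j pre hprelen (Nat.one_le_iff_ne_zero.mpr hj0) hxpre
      have hdheadc : c.head.asIdeal ≤ d.head.asIdeal := by
        rw [← RelSeries.head_take c ⟨j, Nat.lt_succ_of_le hjle⟩]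
        exact hdhead
      -- build the glued chain
      have hglue : ∃ g : LTSeries (PrimeSpectrum A), g.length = n - 1 ∧
          g.head = d.head ∧ J ≤ g.last.asIdeal := by
        rcases eq_or_lt_of_le hjle with hj | hj
        · have hj' : j = c.length := hjdef.trans hj
          refine ⟨d, by omega, rfl, ?_⟩
          rw [hdlast, hprelast]
          have : c ⟨j, Nat.lt_succ_of_le hjle⟩ = c.last := by
            rw [RelSeries.last]
            congr 1
            exact Fin.ext (by simpa using hj')
          rw [this]
          exact hlast
        · have hj' : j < c.length := hjdef ▸ hj
          set suf := c.drop ⟨j + 1, Nat.succ_lt_succ hj'⟩ with hsufdef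
          have hconn : d.last < suf.head := by
            rw [hdlast, hprelast, RelSeries.head_drop]
            exact c.strictMono (by simp [Fin.lt_def])
          refine ⟨d.append suf hconn, ?_, ?_, ?_⟩
          · rw [RelSeries.append_length]
            simp only [hsufdef, RelSeries.drop_length]
            omega
          · rw [RelSeries.head_append]
          · rw [RelSeries.last_append, hsufdef, RelSeries.last_drop]
            exact hlast
      obtain ⟨g, hglen, hghead, hglast⟩ := hglue
      -- monoid bound decreases
      have hmon' : ∀ mc : LTSeries {I : Set P // IsMonPrime I},
          mc.head = myPre α g.head → mc.length ≤ t - 1 := by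
        intro mc hmc
        have hlt : myPre α c.head < myPre α g.head := by
          refine lt_of_le_of_ne ?_ fun heq => ?_
          · intro z hz
            show α z ∈ (g.head).asIdeal
            rw [hghead]
            exact hdheadc hz
          · have hyg : y ∈ (myPre α g.head).1 := by
              rw [hghead]
              exact hdmem d.head d.head_mem
            rw [← heq] at hyg
            have : x ∈ c.head.asIdeal := hyg
            apply hynotin
            refine ((PrimeSpectrum.asIdeal_le_asIdeal _ _).mpr (c.monotone (Fin.zero_le _))) this
        have := hmon (mc.cons (myPre α c.head) (by rw [hmc]; exact hlt))
          (by rw [RelSeries.head_cons])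
        simp only [RelSeries.cons_length] at this
        omega
      have hrec := ih (n - 1) (by omega) g (t - 1) hglen (by rwa [hJdef] at hglast) hmon'
      rw [hglen] at hrec
      -- arithmetic
      rw [hlen]
      have hn1 : 1 ≤ n := by omega
      have hcast1 : ((n : ℕ) : WithBot ℕ∞) = ((n - 1 : ℕ) : WithBot ℕ∞) + 1 := by
        conv_lhs => rw [show n = (n - 1) + 1 by omega]
        rw [Nat.cast_add, Nat.cast_one]
      have hcast2 : ((t : ℕ) : WithBot ℕ∞) = ((t - 1 : ℕ) : WithBot ℕ∞) + 1 := by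
        conv_lhs => rw [show t = (t - 1) + 1 by omega]
        rw [Nat.cast_add, Nat.cast_one]
      rw [hcast1, hcast2, ← add_assoc]
      exact add_le_add_left hrec 1

end Main


/-- Let `P` be a fine and sharp monoid, `A` a noetherian local ring, and `α : P → (A,·)` a
local morphism of monoids.  Then `dim A ≤ dim (A / m_P A) + dim P`. -/
theorem stmt5 {A : Type*} (P : Type*) [CommRing A] [IsNoetherianRing A] [IsLocalRing A]
    [CancelCommMonoid P] (hfg : Monoid.FG P) (hsharp : ∀ x : P, IsUnit x → x = 1)
    (α : P →* A) (hloc : ∀ p : P, IsUnit (α p) → IsUnit p) :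
    ringKrullDim A ≤
      ringKrullDim (A ⧸ Ideal.span (α '' monNonUnits P)) + monoidKrullDim P := by
  classical
  set J := Ideal.span (α '' monNonUnits P) with hJdef
  have hJm : J ≤ IsLocalRing.maximalIdeal A := by
    rw [hJdef, Ideal.span_le]
    rintro _ ⟨z, hz, rfl⟩
    rw [SetLike.mem_coe, IsLocalRing.mem_maximalIdeal, mem_nonunits_iff]
    exact fun hu => hz (hloc z hu)
  have hJne : J ≠ ⊤ :=
    fun h => (IsLocalRing.maximalIdeal.isMaximal A).ne_top (top_le_iff.mp (h ▸ hJm))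
  haveI : Nontrivial (A ⧸ J) := Ideal.Quotient.nontrivial_iff.mpr hJne
  have hDq0 : (0 : WithBot ℕ∞) ≤ ringKrullDim (A ⧸ J) :=
    ringKrullDim_nonneg_of_nontrivial
  haveI hMPne : Nonempty {I : Set P // IsMonPrime I} :=
    ⟨⟨∅, fun x hx => hx.elim, Set.notMem_empty 1, fun x y h => h.elim⟩⟩
  rcases eq_or_ne (monoidKrullDim P) ⊤ with htop | hne
  · rw [htop]
    obtain ⟨e, he⟩ : ∃ e : ℕ∞, ringKrullDim (A ⧸ J) = (e : WithBot ℕ∞) := by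
      cases h : ringKrullDim (A ⧸ J) with
      | bot => rw [h] at hDq0; exact absurd hDq0 (by simp)
      | coe e => exact ⟨e, rfl⟩
    rw [he, show ((⊤ : WithBot ℕ∞)) = ((⊤ : ℕ∞) : WithBot ℕ∞) from rfl,
      ← WithBot.coe_add, add_top]
    exact le_top
  · have h0 : (0 : WithBot ℕ∞) ≤ monoidKrullDim P :=
      Order.krullDim_nonneg
    obtain ⟨D, hD⟩ : ∃ D : ℕ, monoidKrullDim P = (D : WithBot ℕ∞) := by
      cases h : monoidKrullDim P with
      | bot => rw [h] at h0; exact absurd h0 (by simp)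
      | coe e =>
        cases e with
        | top => exact absurd h hne
        | coe D => exact ⟨D, by exact_mod_cast rfl⟩
    have hchains : ∀ mc : LTSeries {I : Set P // IsMonPrime I}, mc.length ≤ D := by
      intro mc
      have h1 := Order.LTSeries.length_le_krullDim mc
      rw [show Order.krullDim {I : Set P // IsMonPrime I} = monoidKrullDim P from rfl, hD] at h1
      exact_mod_cast h1
    rw [hD]
    have hmain : ∀ c : LTSeries (PrimeSpectrum A),
        (c.length : WithBot ℕ∞) ≤ ringKrullDim (A ⧸ J) + (D : WithBot ℕ∞) := by
      intro c
      by_cases hc : J ≤ c.last.asIdeal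
      · exact myMain α hloc c.length c D rfl hc (fun mc _ => hchains mc)
      · have hne' : c.last ≠ ⟨IsLocalRing.maximalIdeal A,
            (IsLocalRing.maximalIdeal.isMaximal A).isPrime⟩ := by
          intro heq
          exact hc (by rw [heq]; exact hJm)
        have hlt : c.last < ⟨IsLocalRing.maximalIdeal A,
            (IsLocalRing.maximalIdeal.isMaximal A).isPrime⟩ := by
          rw [← PrimeSpectrum.asIdeal_lt_asIdeal]
          refine lt_of_le_of_ne (IsLocalRing.le_maximalIdeal c.last.2.ne_top) fun h => ?_
          exact hne' (PrimeSpectrum.ext h)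
        have h2 := myMain α hloc (c.snoc _ hlt).length (c.snoc _ hlt) D rfl
          (by rw [RelSeries.last_snoc]; exact hJm) (fun mc _ => hchains mc)
        refine le_trans ?_ h2
        have : (c.snoc _ hlt).length = c.length + 1 := by simp
        rw [this]
        exact_mod_cast Nat.le_succ c.length
    obtain ⟨e, he⟩ : ∃ e : ℕ∞,
        ringKrullDim (A ⧸ J) + (D : WithBot ℕ∞) = (e : WithBot ℕ∞) := by
      cases h : ringKrullDim (A ⧸ J) + (D : WithBot ℕ∞) with
      | bot =>
        rw [h] at hmain
        have h1 := hmain (RelSeries.singleton _ (Nonempty.some inferInstance))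
        exact absurd h1 (by simp)
      | coe e => exact ⟨e, rfl⟩
    rw [ringKrullDim, Order.krullDim_eq_iSup_length, he]
    rw [WithBot.coe_le_coe]
    refine iSup_le fun c => ?_
    have := hmain c
    rw [he] at this
    exact_mod_cast this
end

section
/- Let P be a monoid such that the sharp quotient P^♯ is fine, let k > 1 be an integer, and suppose the k-Frobenius endomorphism 𝐤_P: P → P, x ↦ x^k, is a flat morphism of monoids. Then P^♯ is a free commutative monoid (isomorphic to ℕ^r for some r). -/
namespace Stmt7Aux

/-- equational flatness of the `K`-power map. -/
def Flat (Q : Type*) [CommMonoid Q] (K : ℕ) : Prop :=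
  ∀ p₁ p₂ q₁ q₂ : Q, p₁ ^ K * q₁ = p₂ ^ K * q₂ →
    ∃ q a b, q₁ = a ^ K * q ∧ q₂ = b ^ K * q ∧ p₁ * a = p₂ * b

/-- trivial units. -/
def Sharp (Q : Type*) [CommMonoid Q] : Prop := ∀ x y : Q, x * y = 1 → x = 1

/-- atom of a commutative monoid -/
def IsAtomM {Q : Type*} [CommMonoid Q] (a : Q) : Prop :=
  a ≠ 1 ∧ ∀ b c : Q, a = b * c → b = 1 ∨ c = 1

variable {Q : Type*} [CancelCommMonoid Q]

theorem Sharp.eq_one_right (hs : Sharp Q) {x y : Q} (h : x * y = 1) : y = 1 :=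
  hs y x (by rwa [mul_comm])

theorem Sharp.pow_eq_one (hs : Sharp Q) {x : Q} {n : ℕ} (h : x ^ n = 1) (hn : n ≠ 0) :
    x = 1 := by
  obtain ⟨m, rfl⟩ := Nat.exists_eq_succ_of_ne_zero hn
  rw [pow_succ] at h
  exact hs.eq_one_right h

theorem Sharp.eq_one_of_dvd_one (hs : Sharp Q) {x : Q} (h : x ∣ 1) : x = 1 := by
  obtain ⟨c, hc⟩ := h; exact hs x c hc.symm

theorem flat_mul {K K' : ℕ} (hK : Flat Q K) (hK' : Flat Q K') : Flat Q (K * K') := by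
  intro p₁ p₂ q₁ q₂ h
  rw [mul_comm K K', pow_mul, pow_mul] at h
  obtain ⟨q, c, d, hc, hd, hcd⟩ := hK (p₁ ^ K') (p₂ ^ K') q₁ q₂ h
  obtain ⟨q', c', d', hc', hd', hcd'⟩ := hK' p₁ p₂ c d hcd
  refine ⟨q' ^ K * q, c', d', ?_, ?_, hcd'⟩
  · rw [hc, hc', mul_pow, ← pow_mul, mul_assoc, mul_comm K' K]
  · rw [hd, hd', mul_pow, ← pow_mul, mul_assoc, mul_comm K' K]

theorem flat_pow {k : ℕ} (hk : Flat Q k) : ∀ n : ℕ, Flat Q (k ^ (n + 1)) := by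
  intro n; induction n with
  | zero => simpa using hk
  | succ m ih => rw [pow_succ]; exact flat_mul ih hk

/-- key consequence ("(1)-lemma"): `x^K = y^K * z` implies `y ∣ x` with `K`-th power quotient. -/
theorem root_lemma {K : ℕ} (hf : Flat Q K) (hs : Sharp Q) (hK : K ≠ 0) {x y z : Q}
    (h : x ^ K = y ^ K * z) : ∃ d, z = d ^ K ∧ x = y * d := by
  obtain ⟨q, a, b, ha, hb, hab⟩ := hf y x z 1 (by rw [h, mul_one])
  have hb1 : b = 1 := by
    refine hs.pow_eq_one ?_ hK
    rcases eq_or_ne (b ^ K) 1 with h1 | h1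
    · exact h1
    · exact absurd (hs _ _ hb.symm) (by simpa using h1)
  have hq1 : q = 1 := by rw [hb1, one_pow, one_mul] at hb; exact hb.symm
  refine ⟨a, by rw [ha, hq1, mul_one], ?_⟩
  rw [hb1, mul_one] at hab; exact hab.symm

theorem pow_left_cancel {K : ℕ} (hf : Flat Q K) (hs : Sharp Q) (hK : K ≠ 0) {x y : Q}
    (h : x ^ K = y ^ K) : x = y := by
  obtain ⟨d, hd1, hd2⟩ := root_lemma hf hs hK (x := x) (y := y) (z := 1) (by rw [h, mul_one])
  have : d = 1 := hs.pow_eq_one hd1.symm hK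
  rw [this, mul_one] at hd2; exact hd2

theorem dvd_antisymm' (hs : Sharp Q) {x y : Q} (h1 : x ∣ y) (h2 : y ∣ x) : x = y := by
  obtain ⟨c, rfl⟩ := h1
  obtain ⟨d, hd⟩ := h2
  have h3 : x * 1 = x * (c * d) := by rw [mul_one]; conv_lhs => rw [hd]; rw [mul_assoc]
  have := mul_left_cancel h3
  have hc : c = 1 := hs c d this.symm
  rw [hc, mul_one]

/-- the evaluation map from exponent vectors -/
noncomputable def ev (S : Finset Q) (f : ↥S →₀ ℕ) : Q := f.prod fun a n => (a : Q) ^ n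

theorem ev_add (S : Finset Q) (f g : ↥S →₀ ℕ) : ev S (f + g) = ev S f * ev S g := by
  classical
  refine Finsupp.prod_add_index ?_ ?_
  · intro a _; exact pow_zero _
  · intro a _ m n; exact pow_add _ _ _

theorem ev_surj (S : Finset Q) (hS : Submonoid.closure (S : Set Q) = ⊤) (x : Q) :
    ∃ f, ev S f = x := by
  classical
  have hx : x ∈ Submonoid.closure (S : Set Q) := hS ▸ Submonoid.mem_top x
  induction hx using Submonoid.closure_induction with
  | mem y hy => exact ⟨Finsupp.single ⟨y, hy⟩ 1, by simp [ev]⟩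
  | one => exact ⟨0, by simp [ev]⟩
  | mul y z _ _ hy hz =>
      obtain ⟨f, hf⟩ := hy; obtain ⟨g, hg⟩ := hz
      exact ⟨f + g, by rw [ev_add, hf, hg]⟩

theorem ev_mono (S : Finset Q) {f g : ↥S →₀ ℕ} (h : f ≤ g) :
    ev S g = ev S f * ev S (g - f) := by
  conv_lhs => rw [← add_tsub_cancel_of_le h]
  exact ev_add S f (g - f)

/-- divisor sets are finite in a f.g. sharp cancellative monoid -/
theorem divisors_finite (hs : Sharp Q) (hFG : Monoid.FG Q) (x : Q) :
    {y : Q | y ∣ x}.Finite := by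
  classical
  obtain ⟨S, hS⟩ := Monoid.fg_def.mp hFG
  by_contra hinf
  have hinf' : {y : Q | y ∣ x}.Infinite := hinf
  obtain e := hinf'.natEmbedding
  -- for each n, a divisor y n of x, all distinct
  set y : ℕ → Q := fun n => (e n : Q) with hy
  have hydvd : ∀ n, y n ∣ x := fun n => (e n).2
  have hyinj : Function.Injective y := fun m n h => by
    have := e.injective (Subtype.ext h); exact this
  choose z hz using hydvd
  choose u hu using fun n => ev_surj S hS (y n)
  choose w hw using fun n => ev_surj S hS (z n)
  -- Dickson
  have hpwo : (Set.univ : Set ((↥S →₀ ℕ) × (↥S →₀ ℕ))).IsPWO := by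
    have h1 : (Set.univ : Set (↥S →₀ ℕ)).IsPWO := Set.isPWO_univ_iff.2 inferInstance
    have := h1.prod h1
    exact this.mono (by simp [Set.subset_def])
  obtain ⟨m, n, hmn, hle⟩ := hpwo.exists_lt (f := fun n => (u n, w n)) (fun _ => Set.mem_univ _)
  have hule : u m ≤ u n := hle.1
  have hwle : w m ≤ w n := hle.2
  have hx_m : x = ev S (u m) * ev S (w m) := by rw [hu, hw, ← hz]
  have hx_n : x = ev S (u n) * ev S (w n) := by rw [hu, hw, ← hz]
  rw [ev_mono S hule, ev_mono S hwle] at hx_n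
  have key : ev S (u n - u m) * ev S (w n - w m) = 1 := by
    have h2 : x * 1 = x * (ev S (u n - u m) * ev S (w n - w m)) := by
      rw [mul_one]
      conv_lhs => rw [hx_n]
      conv_rhs => rw [hx_m]
      ac_rfl
    exact (mul_left_cancel h2).symm
  have h3 : ev S (u n - u m) = 1 := hs _ _ key
  have : y n = y m := by
    rw [← hu n, ← hu m, ev_mono S hule, h3, mul_one]
  exact absurd (hyinj this) (by omega)

/-- strict divisibility is well-founded -/
theorem dvd_wf (hs : Sharp Q) (hFG : Monoid.FG Q) :
    WellFounded (fun a b : Q => a ∣ b ∧ a ≠ b) := by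
  classical
  constructor
  intro x
  have H : ∀ n (x : Q), (divisors_finite hs hFG x).toFinset.card ≤ n →
      Acc (fun a b : Q => a ∣ b ∧ a ≠ b) x := by
    intro n
    induction n with
    | zero =>
      intro x hx
      exfalso
      have : x ∈ (divisors_finite hs hFG x).toFinset := by simp
      have := Finset.card_pos.mpr ⟨x, this⟩
      omega
    | succ n ih =>
      intro x hx
      constructor
      intro y ⟨hyx, hyne⟩
      refine ih y ?_
      have hsub : (divisors_finite hs hFG y).toFinset ⊆ (divisors_finite hs hFG x).toFinset := by
        intro z hz; simp only [Set.Finite.mem_toFinset, Set.mem_setOf_eq] at *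
        exact hz.trans hyx
      have hxnot : x ∉ (divisors_finite hs hFG y).toFinset := by
        simp only [Set.Finite.mem_toFinset, Set.mem_setOf_eq]
        intro hxy
        obtain ⟨c, hc⟩ := hyx
        obtain ⟨d, hd⟩ := hxy
        have h5 : x * 1 = x * (d * c) := by
          rw [mul_one]
          conv_lhs => rw [hc, hd]
          rw [mul_assoc]
        have hdc := (mul_left_cancel h5).symm
        have hd1 : d = 1 := hs d c hdc
        exact hyne (by rw [hd, hd1, mul_one])
      have : (divisors_finite hs hFG y).toFinset.card <
          (divisors_finite hs hFG x).toFinset.card := by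
        refine Finset.card_lt_card ?_
        refine Finset.ssubset_iff_of_subset hsub |>.mpr ⟨x, by simp, hxnot⟩
      omega
  exact H _ x le_rfl

/-- minimal elements of nonempty sets w.r.t. divisibility -/
theorem exists_min_dvd (hs : Sharp Q) (hFG : Monoid.FG Q) {T : Set Q} (hT : T.Nonempty) :
    ∃ μ ∈ T, ∀ z ∈ T, z ∣ μ → z = μ := by
  obtain ⟨μ, hμT, hmin⟩ := (dvd_wf hs hFG).has_min T hT
  refine ⟨μ, hμT, fun z hz hzd => ?_⟩
  by_contra hne
  exact hmin z hz ⟨hzd, hne⟩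

theorem exists_atom_dvd (hs : Sharp Q) (hFG : Monoid.FG Q) {x : Q} (hx : x ≠ 1) :
    ∃ a, IsAtomM a ∧ a ∣ x := by
  have hT : ({y : Q | y ∣ x ∧ y ≠ 1}).Nonempty := ⟨x, dvd_refl x, hx⟩
  obtain ⟨μ, ⟨hμx, hμ1⟩, hmin⟩ := exists_min_dvd hs hFG hT
  refine ⟨μ, ⟨hμ1, ?_⟩, hμx⟩
  intro b c hbc
  by_contra hcon
  push_neg at hcon
  obtain ⟨hb1, hc1⟩ := hcon
  have hbμ : b ∣ μ := ⟨c, hbc⟩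
  have : b = μ := hmin b ⟨hbμ.trans hμx, hb1⟩ hbμ
  subst this
  have : b * 1 = b * c := by rw [mul_one]; exact hbc
  exact hc1 (mul_left_cancel this).symm

/-- every element is a product of atoms -/
theorem exists_atom_factorization (hs : Sharp Q) (hFG : Monoid.FG Q) (x : Q) :
    ∃ l : Multiset Q, (∀ a ∈ l, IsAtomM a) ∧ l.prod = x := by
  induction x using WellFounded.induction (dvd_wf hs hFG) with
  | _ x ih =>
    rcases eq_or_ne x 1 with rfl | hx1
    · exact ⟨0, by simp, by simp⟩
    · obtain ⟨a, ha, hadvd⟩ := exists_atom_dvd hs hFG hx1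
      obtain ⟨b, hb⟩ := hadvd
      have hbx : b ∣ x := ⟨a, by rw [hb, mul_comm]⟩
      have hbne : b ≠ x := by
        intro h; subst h
        have h6 : b * 1 = b * a := by
          rw [mul_one]
          conv_lhs => rw [hb]
          rw [mul_comm]
        exact ha.1 (mul_left_cancel h6).symm
      obtain ⟨l, hl, hlp⟩ := ih b ⟨hbx, hbne⟩
      refine ⟨a ::ₘ l, ?_, by rw [Multiset.prod_cons, hlp, ← hb]⟩
      intro d hd
      rcases Multiset.mem_cons.mp hd with rfl | hd
      · exact ha
      · exact hl d hd

/-- atoms belong to any generating set -/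
theorem atom_mem_gen (hs : Sharp Q) {S : Finset Q} (hS : Submonoid.closure (S : Set Q) = ⊤)
    {a : Q} (ha : IsAtomM a) : a ∈ S := by
  classical
  have hmem : a ∈ Submonoid.closure (S : Set Q) := hS ▸ Submonoid.mem_top a
  obtain ⟨l, hl, hlp⟩ := Submonoid.exists_multiset_of_mem_closure hmem
  have H : ∀ l : Multiset Q, (∀ y ∈ l, y ∈ (S : Set Q)) → l.prod = a → a ∈ S := by
    intro l
    induction l using Multiset.induction with
    | empty =>
      intro _ hlp; simp only [Multiset.prod_zero] at hlp
      exact absurd hlp.symm ha.1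
    | cons s t ih =>
      intro hl hlp
      rw [Multiset.prod_cons] at hlp
      rcases ha.2 s t.prod hlp.symm with h1 | h1
      · rw [h1, one_mul] at hlp
        exact ih (fun y hy => hl y (Multiset.mem_cons_of_mem hy)) hlp
      · rw [h1, mul_one] at hlp
        have hsS := hl s (Multiset.mem_cons_self s t)
        rw [← hlp]
        exact Finset.mem_coe.mp hsS
  exact H l hl hlp

theorem atoms_finite (hs : Sharp Q) (hFG : Monoid.FG Q) : {a : Q | IsAtomM a}.Finite := by
  obtain ⟨S, hS⟩ := Monoid.fg_def.mp hFG
  exact Set.Finite.subset S.finite_toSet (fun a ha => atom_mem_gen hs hS ha)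

/-- `K`-reduced elements: not divisible by a nontrivial `K`-th power. -/
def Red (K : ℕ) (x : Q) : Prop := ∀ c : Q, (∃ q, x = c ^ K * q) → c = 1

theorem exists_red (hs : Sharp Q) (hFG : Monoid.FG Q) (K : ℕ) (hK : K ≠ 0) (x : Q) :
    ∃ c q, x = c ^ K * q ∧ Red K q := by
  induction x using WellFounded.induction (dvd_wf hs hFG) with
  | _ x ih =>
    by_cases hred : Red K x
    · exact ⟨1, x, by rw [one_pow, one_mul], hred⟩
    · simp only [Red, not_forall] at hred
      obtain ⟨c, ⟨q, hq⟩, hc1⟩ := hred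
      have hqx : q ∣ x := ⟨c ^ K, by rw [hq, mul_comm]⟩
      have hqne : q ≠ x := by
        intro h; subst h
        have h7 : q * 1 = q * c ^ K := by
          rw [mul_one]
          conv_lhs => rw [hq]
          rw [mul_comm]
        exact hc1 (hs.pow_eq_one (mul_left_cancel h7).symm hK)
      obtain ⟨c', q', hq', hred'⟩ := ih q ⟨hqx, hqne⟩
      exact ⟨c * c', q', by rw [hq, hq', mul_pow, mul_assoc], hred'⟩

/-- uniqueness of reduced representatives in a class modulo `K`-th powers -/
theorem red_unique {K : ℕ} (hf : Flat Q K) {s s' σ τ : Q} (hr : Red K s) (hr' : Red K s')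
    (h : s * σ ^ K = s' * τ ^ K) : s = s' := by
  obtain ⟨q, a, b, ha, hb, -⟩ := hf σ τ s s' (by rw [mul_comm (σ ^ K), mul_comm (τ ^ K)]; exact h)
  have ha1 : a = 1 := hr a ⟨q, ha⟩
  have hb1 : b = 1 := hr' b ⟨q, hb⟩
  rw [ha1, one_pow, one_mul] at ha
  rw [hb1, one_pow, one_mul] at hb
  rw [ha, hb]

/-- Two divisibility-minimal elements of `{h ≠ 1 | a ∣ h^K}` coincide (K a power of k). -/
theorem Hmin_unique (hs : Sharp Q) {k : ℕ} (hk : 1 < k) (hflat : Flat Q k)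
    {a : Q} (ha : IsAtomM a) {n : ℕ} {h h' : Q}
    (hmem : h ≠ 1 ∧ a ∣ h ^ k ^ (n+1)) (hmem' : h' ≠ 1 ∧ a ∣ h' ^ k ^ (n+1))
    (hmin : ∀ z : Q, (z ≠ 1 ∧ a ∣ z ^ k ^ (n+1)) → z ∣ h → z = h)
    (hmin' : ∀ z : Q, (z ≠ 1 ∧ a ∣ z ^ k ^ (n+1)) → z ∣ h' → z = h') :
    h = h' := by
  set K := k ^ (n+1) with hKdef
  have hKne : K ≠ 0 := (pow_pos (by omega : 0 < k) (n+1)).ne'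
  have hfK : Flat Q K := flat_pow hflat n
  obtain ⟨s, hsdef⟩ := hmem.2
  obtain ⟨s', hsdef'⟩ := hmem'.2
  -- s is reduced
  have hsred : ∀ (hh : Q) (ss : Q), hh ≠ 1 → a ∣ hh ^ K → hh ^ K = a * ss →
      (∀ z : Q, (z ≠ 1 ∧ a ∣ z ^ K) → z ∣ hh → z = hh) → Red K ss := by
    intro hh ss hh1 hhdvd hhs hhmin
    intro c ⟨q, hq⟩
    by_contra hc1
    have h8 : hh ^ K = c ^ K * (a * q) := by
      rw [hhs, hq]; ac_rfl
    obtain ⟨d, hd1, hd2⟩ := root_lemma hfK hs hKne h8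
    have hd1' : d ≠ 1 := by
      intro h; rw [h, one_pow] at hd1
      exact ha.1 (hs a q hd1)
    have hdH : d ≠ 1 ∧ a ∣ d ^ K := ⟨hd1', ⟨q, hd1.symm⟩⟩
    have hddvd : d ∣ hh := ⟨c, by rw [hd2, mul_comm]⟩
    have := hhmin d hdH hddvd
    subst this
    have h9 : d * 1 = d * c := by
      rw [mul_one]
      conv_lhs => rw [hd2]
      rw [mul_comm]
    exact hc1 (mul_left_cancel h9).symm
  have hred : Red K s := hsred h s hmem.1 hmem.2 hsdef hmin
  have hred' : Red K s' := hsred h' s' hmem'.1 hmem'.2 hsdef' hmin'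
  have hclass : s * h' ^ K = s' * h ^ K := by
    have e1 : a * (s * h' ^ K) = a * (s' * h ^ K) := by
      calc a * (s * h' ^ K) = (a * s) * h' ^ K := by rw [mul_assoc]
      _ = h ^ K * h' ^ K := by rw [← hsdef]
      _ = (a * s') * h ^ K := by rw [← hsdef']; ac_rfl
      _ = a * (s' * h ^ K) := by rw [mul_assoc]
    exact mul_left_cancel e1
  have hss : s = s' := red_unique hfK hred hred' hclass
  subst hss
  have hpow : h ^ K = h' ^ K := by rw [hsdef, hsdef']
  exact pow_left_cancel hfK hs hKne hpow

/-- every atom is radical: `a ∣ x ^ N → a ∣ x` -/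
theorem atom_radical (hs : Sharp Q) (hFG : Monoid.FG Q) {k : ℕ} (hk : 1 < k)
    (hflat : Flat Q k) {a : Q} (ha : IsAtomM a) {x : Q} {N : ℕ} (hN : N ≠ 0)
    (hdvd : a ∣ x ^ N) : a ∣ x := by
  classical
  -- the sets H n and their minima
  set H : ℕ → Set Q := fun n => {h : Q | h ≠ 1 ∧ a ∣ h ^ k ^ (n+1)} with hHdef
  have haH : ∀ n, a ∈ H n := fun n =>
    ⟨ha.1, dvd_pow_self a (Nat.pow_pos (n := n+1) (by omega : 0 < k)).ne'⟩
  -- minimal elements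
  have hminex : ∀ n, ∃ μ ∈ H n, ∀ z ∈ H n, z ∣ μ → z = μ := fun n =>
    exists_min_dvd hs hFG ⟨a, haH n⟩
  choose M hM hMmin using hminex
  -- each M n divides every member of H n
  have hMdvd : ∀ n, ∀ h ∈ H n, M n ∣ h := by
    intro n h hh
    obtain ⟨μ, ⟨hμh, hμH⟩, hμmin⟩ :=
      exists_min_dvd hs hFG (T := {d : Q | d ∣ h ∧ d ∈ H n}) ⟨h, dvd_refl h, hh⟩
    have hμglobal : ∀ z ∈ H n, z ∣ μ → z = μ := by
      intro z hz hzμ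
      exact hμmin z ⟨hzμ.trans hμh, hz⟩ hzμ
    have : μ = M n := by
      refine Hmin_unique hs hk hflat ha hμH (hM n) hμglobal ?_
      intro z hz hzm; exact hMmin n z hz hzm
    rw [← this]; exact hμh
  -- monotonicity: H n ⊆ H (n+1), so M (n+1) ∣ M n
  have hHmono : ∀ n, H n ⊆ H (n + 1) := by
    intro n h hh
    exact ⟨hh.1, hh.2.trans (pow_dvd_pow h (Nat.pow_le_pow_right (by omega) (by omega)))⟩
  have hMstep : ∀ n, M (n+1) ∣ M n := fun n => hMdvd (n+1) (M n) (hHmono n (hM n))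
  have hMchain : ∀ m n, m ≤ n → M n ∣ M m := by
    intro m n hmn
    induction n with
    | zero => rw [Nat.le_zero.mp hmn]
    | succ p ih =>
      rcases Nat.lt_or_ge m (p+1) with h1 | h1
      · exact (hMstep p).trans (ih (by omega))
      · have : m = p + 1 := by omega
        rw [this]
  -- stabilization
  obtain ⟨μ', ⟨n₀, hn₀⟩, hμ'min⟩ :=
    exists_min_dvd hs hFG (T := Set.range M) ⟨M 0, Set.mem_range_self 0⟩
  have hstab : ∀ n, n₀ ≤ n → M n = M n₀ := by
    intro n hn
    have h1 : M n ∣ M n₀ := hMchain n₀ n hn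
    rw [hn₀] at h1 ⊢
    exact hμ'min (M n) (Set.mem_range_self n) h1
  -- M n₀ = a
  have hMa : M n₀ = a := by
    have h1 : M n₀ ∣ a := hMdvd n₀ a (haH n₀)
    obtain ⟨c, hc⟩ := h1
    rcases ha.2 (M n₀) c hc with h2 | h2
    · exact absurd h2 (hM n₀).1
    · rw [h2, mul_one] at hc; exact hc.symm
  -- conclude
  rcases eq_or_ne x 1 with rfl | hx1
  · rw [one_pow] at hdvd
    exact absurd (hs.eq_one_of_dvd_one hdvd) ha.1
  · -- choose n ≥ n₀ with k^(n+1) ≥ N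
    have hbig : ∃ n, n₀ ≤ n ∧ N ≤ k ^ (n + 1) := by
      refine ⟨n₀ + N, by omega, ?_⟩
      calc N ≤ n₀ + N + 1 := by omega
      _ ≤ k ^ (n₀ + N + 1) := Nat.le_of_lt (Nat.lt_pow_self hk)
    obtain ⟨n, hn1, hn2⟩ := hbig
    have hxH : x ∈ H n := ⟨hx1, hdvd.trans (pow_dvd_pow x hn2)⟩
    have := hMdvd n x hxH
    rwa [hstab n hn1, hMa] at this

/-- divisors of powers of an atom are powers of the atom -/
theorem dvd_atom_pow (hs : Sharp Q) (hFG : Monoid.FG Q) {k : ℕ} (hk : 1 < k)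
    (hflat : Flat Q k) {a₀ : Q} (ha₀ : IsAtomM a₀) :
    ∀ (x : Q) (N : ℕ), x ∣ a₀ ^ N → ∃ m, x = a₀ ^ m := by
  have main : ∀ (x : Q), ∀ (N : ℕ), x ∣ a₀ ^ N → ∃ m, x = a₀ ^ m := by
    intro x
    induction x using WellFounded.induction (dvd_wf hs hFG) with
    | _ x ih =>
      intro N hxN
      rcases eq_or_ne x 1 with rfl | hx1
      · exact ⟨0, (pow_zero a₀).symm⟩
      · obtain ⟨b, hb, hbdvd⟩ := exists_atom_dvd hs hFG hx1
        have hbN : b ∣ a₀ ^ N := hbdvd.trans hxN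
        have hN0 : N ≠ 0 := by
          intro h; subst h
          rw [pow_zero] at hxN
          exact hx1 (hs.eq_one_of_dvd_one hxN)
        have hba₀ : b ∣ a₀ := atom_radical hs hFG hk hflat hb hN0 hbN
        have hba : b = a₀ := by
          obtain ⟨c, hc⟩ := hba₀
          rcases ha₀.2 b c hc with h1 | h1
          · exact absurd h1 hb.1
          · rw [h1, mul_one] at hc; exact hc.symm
        obtain ⟨x', hx'⟩ := hbdvd
        rw [hba] at hx'
        have hx'x : x' ∣ x := ⟨a₀, by rw [hx', mul_comm]⟩
        have hx'ne : x' ≠ x := by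
          intro h; subst h
          have h6 : x' * 1 = x' * a₀ := by
            rw [mul_one]
            conv_lhs => rw [hx']
            rw [mul_comm]
          exact ha₀.1 (mul_left_cancel h6).symm
        -- x' ∣ a₀ ^ (N - 1)
        obtain ⟨y, hy⟩ := hxN
        obtain ⟨N', rfl⟩ := Nat.exists_eq_succ_of_ne_zero hN0
        have h7 : a₀ * a₀ ^ N' = a₀ * (x' * y) := by
          rw [← pow_succ']
          rw [hy, hx']
          ac_rfl
        have h8 : a₀ ^ N' = x' * y := mul_left_cancel h7
        obtain ⟨m, hm⟩ := ih x' ⟨hx'x, hx'ne⟩ N' ⟨y, h8⟩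
        exact ⟨m + 1, by rw [hx', hm, pow_succ, mul_comm]⟩
  exact main


section QuotientCon

variable (a₀ : Q)

/-- the congruence identifying the atom `a₀` with `1` -/
def acon : Con Q where
  r x y := ∃ i j : ℕ, x * a₀ ^ i = y * a₀ ^ j
  iseqv := by
    constructor
    · exact fun x => ⟨0, 0, rfl⟩
    · rintro x y ⟨i, j, h⟩; exact ⟨j, i, h.symm⟩
    · rintro x y z ⟨i, j, h⟩ ⟨i', j', h'⟩
      refine ⟨i + i', j' + j, ?_⟩
      rw [pow_add, pow_add]
      calc x * (a₀ ^ i * a₀ ^ i') = (x * a₀ ^ i) * a₀ ^ i' := by ac_rfl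
      _ = (y * a₀ ^ i') * a₀ ^ j := by rw [h]; ac_rfl
      _ = (z * a₀ ^ j') * a₀ ^ j := by rw [h']
      _ = z * (a₀ ^ j' * a₀ ^ j) := by ac_rfl
  mul' := by
    rintro w x y z ⟨i, j, h⟩ ⟨i', j', h'⟩
    refine ⟨i + i', j + j', ?_⟩
    rw [pow_add, pow_add]
    calc w * y * (a₀ ^ i * a₀ ^ i') = (w * a₀ ^ i) * (y * a₀ ^ i') := by ac_rfl
    _ = (x * a₀ ^ j) * (z * a₀ ^ j') := by rw [h, h']
    _ = x * z * (a₀ ^ j * a₀ ^ j') := by ac_rfl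

theorem acon_coe_pow (x : Q) (n : ℕ) :
    ((x ^ n : Q) : (acon a₀).Quotient) = (x : (acon a₀).Quotient) ^ n := by
  induction n with
  | zero => rw [pow_zero, pow_zero, Con.coe_one]
  | succ m ih => rw [pow_succ, pow_succ, Con.coe_mul, ih]

theorem acon_bar_a₀ : ((a₀ : (acon a₀).Quotient)) = 1 := by
  rw [← Con.coe_one, Con.eq]
  exact ⟨0, 1, by simp⟩

theorem acon_cancel : ∀ x y z : (acon a₀).Quotient, x * y = x * z → y = z := by
  intro x y z
  induction x using Con.induction_on with
  | H x =>
    induction y using Con.induction_on with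
    | H y =>
      induction z using Con.induction_on with
      | H z =>
        intro h
        rw [← Con.coe_mul, ← Con.coe_mul, Con.eq] at h
        obtain ⟨i, j, h⟩ := h
        rw [Con.eq]
        refine ⟨i, j, ?_⟩
        have h2 : x * (y * a₀ ^ i) = x * (z * a₀ ^ j) := by
          calc x * (y * a₀ ^ i) = x * y * a₀ ^ i := by rw [mul_assoc]
          _ = x * z * a₀ ^ j := h
          _ = x * (z * a₀ ^ j) := by rw [mul_assoc]
        exact mul_left_cancel h2

theorem acon_sharp (hs : Sharp Q) (hFG : Monoid.FG Q) {k : ℕ} (hk : 1 < k)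
    (hflat : Flat Q k) (ha₀ : IsAtomM a₀) : Sharp ((acon a₀).Quotient) := by
  intro x y
  induction x using Con.induction_on with
  | H x =>
    induction y using Con.induction_on with
    | H y =>
      intro h
      rw [← Con.coe_mul, ← Con.coe_one, Con.eq] at h
      obtain ⟨i, j, h⟩ := h
      rw [one_mul] at h
      have hxdvd : x ∣ a₀ ^ j := ⟨y * a₀ ^ i, by rw [← h]; ac_rfl⟩
      obtain ⟨m, rfl⟩ := dvd_atom_pow hs hFG hk hflat ha₀ x j hxdvd
      rw [acon_coe_pow, acon_bar_a₀, one_pow]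

theorem acon_flat {k : ℕ} (hk : 1 < k) (hflat : Flat Q k) : Flat ((acon a₀).Quotient) k := by
  intro p₁ p₂ q₁ q₂
  induction p₁ using Con.induction_on with
  | H p₁ =>
  induction p₂ using Con.induction_on with
  | H p₂ =>
  induction q₁ using Con.induction_on with
  | H q₁ =>
  induction q₂ using Con.induction_on with
  | H q₂ =>
    intro h
    rw [← acon_coe_pow, ← acon_coe_pow, ← Con.coe_mul, ← Con.coe_mul, Con.eq] at h
    obtain ⟨i, j, h⟩ := h
    -- split i = k * i' + i₀, j = k * j' + j₀
    obtain ⟨i', i₀, hi, -⟩ : ∃ i' i₀, i = k * i' + i₀ ∧ i₀ < k :=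
      ⟨i / k, i % k, (Nat.div_add_mod i k).symm, Nat.mod_lt _ (by omega)⟩
    obtain ⟨j', j₀, hj, -⟩ : ∃ j' j₀, j = k * j' + j₀ ∧ j₀ < k :=
      ⟨j / k, j % k, (Nat.div_add_mod j k).symm, Nat.mod_lt _ (by omega)⟩
    have h2 : (p₁ * a₀ ^ i') ^ k * (q₁ * a₀ ^ i₀) = (p₂ * a₀ ^ j') ^ k * (q₂ * a₀ ^ j₀) := by
      rw [mul_pow, mul_pow, ← pow_mul, ← pow_mul]
      calc p₁ ^ k * a₀ ^ (i' * k) * (q₁ * a₀ ^ i₀) = p₁ ^ k * q₁ * a₀ ^ (i' * k + i₀) := by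
            rw [pow_add]; ac_rfl
      _ = p₂ ^ k * q₂ * a₀ ^ (j' * k + j₀) := by
            rw [mul_comm i' k, ← hi, mul_comm j' k, ← hj]; exact h
      _ = p₂ ^ k * a₀ ^ (j' * k) * (q₂ * a₀ ^ j₀) := by rw [pow_add]; ac_rfl
    obtain ⟨q, c, d, hc, hd, hcd⟩ := hflat _ _ _ _ h2
    refine ⟨(q : (acon a₀).Quotient), (c : Q), (d : Q), ?_, ?_, ?_⟩
    · have : ((q₁ * a₀ ^ i₀ : Q) : (acon a₀).Quotient) = ((c ^ k * q : Q) : (acon a₀).Quotient) := by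
        rw [hc]
      rw [Con.coe_mul, Con.coe_mul, acon_coe_pow, acon_coe_pow, acon_bar_a₀, one_pow, mul_one] at this
      exact this
    · have : ((q₂ * a₀ ^ j₀ : Q) : (acon a₀).Quotient) = ((d ^ k * q : Q) : (acon a₀).Quotient) := by
        rw [hd]
      rw [Con.coe_mul, Con.coe_mul, acon_coe_pow, acon_coe_pow, acon_bar_a₀, one_pow, mul_one] at this
      exact this
    · have : ((p₁ * a₀ ^ i' * c : Q) : (acon a₀).Quotient) = ((p₂ * a₀ ^ j' * d : Q) : (acon a₀).Quotient) := by
        rw [hcd]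
      simp only [Con.coe_mul, acon_coe_pow, acon_bar_a₀, one_pow, mul_one] at this
      exact this

theorem acon_atom_rep (hs : Sharp Q) (hFG : Monoid.FG Q) {β : (acon a₀).Quotient}
    (hβ : IsAtomM β) : ∃ a : Q, IsAtomM a ∧ a ≠ a₀ ∧ (a : (acon a₀).Quotient) = β := by
  obtain ⟨x, hx⟩ := Con.mk'_surjective (c := acon a₀) β
  have hx' : (x : (acon a₀).Quotient) = β := hx
  obtain ⟨l, hl, hlp⟩ := exists_atom_factorization hs hFG x
  -- β is a product of images of atoms; find the one that equals β
  have H : ∀ l : Multiset Q, (∀ a ∈ l, IsAtomM a) →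
      ((l.prod : Q) : (acon a₀).Quotient) = β →
      ∃ a : Q, IsAtomM a ∧ a ≠ a₀ ∧ (a : (acon a₀).Quotient) = β := by
    intro l
    induction l using Multiset.induction with
    | empty =>
      intro _ hp
      simp only [Multiset.prod_zero] at hp
      rw [Con.coe_one] at hp
      exact absurd hp.symm hβ.1
    | cons s t ih =>
      intro hal hp
      rw [Multiset.prod_cons, Con.coe_mul] at hp
      rcases hβ.2 _ _ hp.symm with h1 | h1
      · exact ih (fun a ha => hal a (Multiset.mem_cons_of_mem ha)) (by rw [← hp, h1, one_mul])
      · refine ⟨s, hal s (Multiset.mem_cons_self s t), ?_, by rw [← hp, h1, mul_one]⟩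
        intro hcon
        subst hcon
        rw [acon_bar_a₀, one_mul] at hp
        -- then β = image of t.prod with s = a₀ killed; but also β = 1 * β ... 
        rw [h1] at hp
        exact hβ.1 hp.symm
  exact H l hl (by rw [hlp]; exact hx')

end QuotientCon

/-- existence of a minimal lift of each class -/
theorem exists_min_lift (hs : Sharp Q) (hFG : Monoid.FG Q) {a₀ : Q}
    (c : (acon a₀).Quotient) :
    ∃ μ : Q, (μ : (acon a₀).Quotient) = c ∧ ∀ y : Q, (y : (acon a₀).Quotient) = c → μ ∣ y := by
  obtain ⟨y₀, hy₀⟩ := Con.mk'_surjective (c := acon a₀) c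
  have hy₀' : (y₀ : (acon a₀).Quotient) = c := hy₀
  obtain ⟨μ, ⟨hμd, hμc⟩, hμmin⟩ := exists_min_dvd hs hFG
    (T := {y : Q | y ∣ y₀ ∧ (y : (acon a₀).Quotient) = c}) ⟨y₀, dvd_refl _, hy₀'⟩
  refine ⟨μ, hμc, ?_⟩
  intro y hy
  have hcon : (acon a₀) μ y := ((acon a₀).eq).mp (by rw [hμc, hy])
  obtain ⟨i, j, hij⟩ := hcon
  rcases Nat.le_total i j with hle | hle
  · have h2 : y * a₀ ^ (j - i) * a₀ ^ i = μ * a₀ ^ i := by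
      rw [mul_assoc, ← pow_add, Nat.sub_add_cancel hle]
      exact hij.symm
    have h3 : y * a₀ ^ (j - i) = μ := mul_right_cancel h2
    have hyμ : y ∣ μ := ⟨a₀ ^ (j - i), h3.symm⟩
    have h4 : y = μ := hμmin y ⟨hyμ.trans hμd, hy⟩ hyμ
    rw [h4]
  · have h2 : μ * a₀ ^ (i - j) * a₀ ^ j = y * a₀ ^ j := by
      rw [mul_assoc, ← pow_add, Nat.sub_add_cancel hle]
      exact hij
    exact ⟨a₀ ^ (i - j), (mul_right_cancel h2).symm⟩

/-- the main step: if the quotient by an atom is free, so is the monoid (with rank one more) -/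
theorem quotient_step (hs : Sharp Q) (hFG : Monoid.FG Q) {k : ℕ} (hk : 1 < k)
    (hflat : Flat Q k) {a₀ : Q} (ha₀ : IsAtomM a₀) {s : ℕ}
    (e : (acon a₀).Quotient ≃* Multiplicative (Fin s →₀ ℕ)) :
    Nonempty (Q ≃* Multiplicative (Fin (s + 1) →₀ ℕ)) := by
  classical
  obtain ⟨m, rfl⟩ : ∃ m, k = m + 1 := ⟨k - 1, by omega⟩
  have hm1 : 1 ≤ m := by omega
  choose lam hlam1 hlam2 using fun c => exists_min_lift (a₀ := a₀) hs hFG c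
  have hpow1 : ∀ n : ℕ, a₀ ^ n = 1 → n = 0 := by
    intro n hn
    by_contra h
    obtain ⟨p, rfl⟩ := Nat.exists_eq_succ_of_ne_zero h
    rw [pow_succ'] at hn
    exact ha₀.1 (hs a₀ _ hn)
  have lam_decomp : ∀ y : Q, ∃ t : ℕ, y = lam (y : (acon a₀).Quotient) * a₀ ^ t := by
    intro y
    obtain ⟨v, hv⟩ := hlam2 (y : (acon a₀).Quotient) y rfl
    have hbar : ((v : Q) : (acon a₀).Quotient) = 1 := by
      have h1 : ((y : Q) : (acon a₀).Quotient) =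
          ((lam (y : (acon a₀).Quotient) * v : Q) : (acon a₀).Quotient) := by rw [← hv]
      rw [Con.coe_mul, hlam1] at h1
      have h2 : ((y : Q) : (acon a₀).Quotient) * 1 =
          ((y : Q) : (acon a₀).Quotient) * (v : (acon a₀).Quotient) := by
        rw [mul_one]; exact h1
      exact (acon_cancel a₀ _ _ _ h2).symm
    rw [← Con.coe_one, Con.eq] at hbar
    obtain ⟨i, j, hij⟩ := hbar
    rw [one_mul] at hij
    have hvdvd : v ∣ a₀ ^ j := ⟨a₀ ^ i, hij.symm⟩
    obtain ⟨t, rfl⟩ := dvd_atom_pow hs hFG hk hflat ha₀ v j hvdvd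
    exact ⟨t, hv⟩
  have lam_one : lam 1 = 1 := by
    have h1 : lam 1 ∣ 1 := hlam2 1 1 (Con.coe_one)
    exact hs.eq_one_of_dvd_one h1
  -- the size function
  set sz : (acon a₀).Quotient → ℕ :=
    fun c => (Multiplicative.toAdd (e c)).sum fun _ v => v with hszdef
  have sz_mul : ∀ x y, sz (x * y) = sz x + sz y := by
    intro x y
    simp only [hszdef, map_mul, toAdd_mul]
    exact Finsupp.sum_add_index' (fun _ => rfl) (fun _ _ _ => rfl)
  have sz_pow : ∀ (x) (n : ℕ), sz (x ^ n) = n * sz x := by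
    intro x n
    induction n with
    | zero =>
      simp only [pow_zero, zero_mul, hszdef, map_one, toAdd_one]
      exact Finsupp.sum_zero_index
    | succ p ih => rw [pow_succ, sz_mul, ih]; ring
  have sz_zero : ∀ x, sz x = 0 → x = 1 := by
    intro x hx
    simp only [hszdef] at hx
    have h2 : Multiplicative.toAdd (e x) = 0 := by
      ext i
      by_cases hi : i ∈ (Multiplicative.toAdd (e x)).support
      · exact (Finset.sum_eq_zero_iff.mp hx) i hi
      · simpa using Finsupp.notMem_support_iff.mp hi
    have h3 : e x = 1 := by
      have := congrArg Multiplicative.ofAdd h2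
      rwa [ofAdd_toAdd, ofAdd_zero] at this
    exact e.injective (by rw [h3, map_one])
  -- the key multiplicativity of the minimal lift
  have key : ∀ N : ℕ, ∀ a b : (acon a₀).Quotient, sz a + sz b ≤ N →
      lam (a * b) = lam a * lam b := by
    intro N
    induction N using Nat.strongRecOn with
    | ind N ih =>
      intro a b hab
      rcases eq_or_ne a 1 with rfl | ha1
      · rw [one_mul, lam_one, one_mul]
      rcases eq_or_ne b 1 with rfl | hb1
      · rw [mul_one, lam_one, mul_one]
      have hsza : 1 ≤ sz a := by
        rcases Nat.eq_zero_or_pos (sz a) with h | h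
        · exact absurd (sz_zero a h) ha1
        · exact h
      have hszb : 1 ≤ sz b := by
        rcases Nat.eq_zero_or_pos (sz b) with h | h
        · exact absurd (sz_zero b h) hb1
        · exact h
      obtain ⟨t, hT⟩ : ∃ t : ℕ, lam a * lam b = lam (a * b) * a₀ ^ t := by
        obtain ⟨t, ht⟩ := lam_decomp (lam a * lam b)
        rw [Con.coe_mul, hlam1, hlam1] at ht
        exact ⟨t, ht⟩
      -- apply flatness
      have hrel : (lam a) ^ (m+1) * (lam b * (a₀ ^ t) ^ m) =
          (a₀ ^ t) ^ (m+1) * (lam (a * b) * (lam a) ^ m) := by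
        calc (lam a) ^ (m+1) * (lam b * (a₀ ^ t) ^ m)
            = (lam a * lam b) * ((lam a) ^ m * (a₀ ^ t) ^ m) := by rw [pow_succ]; ac_rfl
        _ = (lam (a * b) * a₀ ^ t) * ((lam a) ^ m * (a₀ ^ t) ^ m) := by rw [hT]
        _ = (a₀ ^ t) ^ (m+1) * (lam (a * b) * (lam a) ^ m) := by rw [pow_succ]; ac_rfl
      obtain ⟨q, c, d, hc, hd, hcd⟩ :=
        hflat (lam a) (a₀ ^ t) (lam b * (a₀ ^ t) ^ m) (lam (a * b) * (lam a) ^ m) hrel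
      -- push to the quotient
      have hbarb : b = (c : (acon a₀).Quotient) ^ (m+1) * (q : (acon a₀).Quotient) := by
        have h1 := congrArg (fun x : Q => (x : (acon a₀).Quotient)) hc
        simp only [Con.coe_mul, acon_coe_pow, acon_bar_a₀, one_pow, mul_one, hlam1] at h1
        exact h1
      have hbard : ((d : Q) : (acon a₀).Quotient) = a * (c : (acon a₀).Quotient) := by
        have h1 := congrArg (fun x : Q => (x : (acon a₀).Quotient)) hcd
        simp only [Con.coe_mul, acon_coe_pow, acon_bar_a₀, one_pow, one_mul, hlam1] at h1
        exact h1.symm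
      set cb := ((c : Q) : (acon a₀).Quotient) with hcbdef
      set qb := ((q : Q) : (acon a₀).Quotient) with hqbdef
      have hszb_eq : sz b = (m+1) * sz cb + sz qb := by
        rw [hbarb, sz_mul, sz_pow]
      have hszc_lt : sz cb < sz b := by
        rcases Nat.eq_zero_or_pos (sz cb) with h | h
        · omega
        · have : (m+1) * sz cb ≥ 2 * sz cb := by
            have : 2 ≤ m + 1 := by omega
            exact Nat.mul_le_mul_right _ this
          omega
      -- inner induction: lam (cb ^ jj * qb) = (lam cb) ^ jj * lam qb
      have inner : ∀ jj : ℕ, jj * sz cb + sz qb ≤ sz b →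
          lam (cb ^ jj * qb) = (lam cb) ^ jj * lam qb := by
        intro jj
        induction jj with
        | zero => intro _; rw [pow_zero, one_mul, pow_zero, one_mul]
        | succ p ihp =>
          intro hle
          have hle' : p * sz cb + sz qb ≤ sz b := by
            have : p * sz cb ≤ (p+1) * sz cb := Nat.mul_le_mul_right _ (by omega)
            omega
          have h1 : lam (cb * (cb ^ p * qb)) = lam cb * lam (cb ^ p * qb) := by
            refine ih (sz cb + (p * sz cb + sz qb)) ?_ cb (cb ^ p * qb) ?_
            · have h2 : sz cb + (p * sz cb + sz qb) = (p+1) * sz cb + sz qb := by ring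
              omega
            · rw [sz_mul, sz_pow]
          have h2 : cb ^ (p+1) * qb = cb * (cb ^ p * qb) := by rw [pow_succ]; ac_rfl
          rw [h2, h1, ihp hle', pow_succ]
          ac_rfl
      have w_eq : lam b = (lam cb) ^ (m+1) * lam qb := by
        rw [hbarb]
        exact inner (m+1) (by omega)
      have d_eq : lam (a * cb) = lam a * lam cb := by
        refine ih (sz a + sz cb) ?_ a cb le_rfl
        omega
      -- decompositions of q and d
      obtain ⟨γ, hγ⟩ := lam_decomp q
      obtain ⟨β, hβ⟩ := lam_decomp d
      rw [hbard, d_eq] at hβ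
      -- final computation
      have hfin : lam (a * b) * (lam a) ^ m * 1 =
          lam (a * b) * (lam a) ^ m * a₀ ^ (t + (β * (m+1) + γ)) := by
        rw [mul_one]
        calc lam (a * b) * (lam a) ^ m = d ^ (m+1) * q := hd
        _ = (lam a * lam cb * a₀ ^ β) ^ (m+1) * (lam qb * a₀ ^ γ) := by rw [← hβ, ← hγ]
        _ = (lam a) ^ (m+1) * ((lam cb) ^ (m+1) * lam qb) * (a₀ ^ (β * (m+1)) * a₀ ^ γ) := by
              rw [mul_pow, mul_pow, pow_mul]
              ac_rfl
        _ = (lam a) ^ (m+1) * lam b * (a₀ ^ (β * (m+1)) * a₀ ^ γ) := by rw [← w_eq]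
        _ = (lam a) ^ m * (lam a * lam b) * (a₀ ^ (β * (m+1)) * a₀ ^ γ) := by
              rw [pow_succ]; ac_rfl
        _ = (lam a) ^ m * (lam (a * b) * a₀ ^ t) * (a₀ ^ (β * (m+1)) * a₀ ^ γ) := by rw [hT]
        _ = lam (a * b) * (lam a) ^ m * a₀ ^ (t + (β * (m+1) + γ)) := by
              rw [pow_add, pow_add]; ac_rfl
      have h9 : (1 : Q) = a₀ ^ (t + (β * (m+1) + γ)) := mul_left_cancel hfin
      have h10 : t + (β * (m+1) + γ) = 0 := hpow1 _ h9.symm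
      have ht0 : t = 0 := by omega
      rw [ht0, pow_zero, mul_one] at hT
      exact hT.symm
  have lam_mul : ∀ a b : (acon a₀).Quotient, lam (a * b) = lam a * lam b :=
    fun a b => key (sz a + sz b) a b le_rfl
  -- assemble the isomorphism
  let Φ : Multiplicative ℕ × (acon a₀).Quotient →* Q :=
    { toFun := fun p => a₀ ^ (Multiplicative.toAdd p.1) * lam p.2
      map_one' := by
        simp only [Prod.fst_one, Prod.snd_one, toAdd_one, pow_zero, one_mul, lam_one]
      map_mul' := by
        intro p p'
        simp only [Prod.fst_mul, Prod.snd_mul, toAdd_mul]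
        rw [lam_mul, pow_add]
        ac_rfl }
  have Φinj : Function.Injective Φ := by
    intro p p' h
    simp only [Φ, MonoidHom.coe_mk, OneHom.coe_mk] at h
    have hbar : p.2 = p'.2 := by
      have h1 := congrArg (fun x : Q => (x : (acon a₀).Quotient)) h
      simp only [Con.coe_mul, acon_coe_pow, acon_bar_a₀, one_pow, one_mul, hlam1] at h1
      exact h1
    rw [hbar] at h
    have h2 : a₀ ^ (Multiplicative.toAdd p.1) = a₀ ^ (Multiplicative.toAdd p'.1) :=
      mul_right_cancel h
    have h3 : Multiplicative.toAdd p.1 = Multiplicative.toAdd p'.1 := by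
      rcases Nat.le_total (Multiplicative.toAdd p.1) (Multiplicative.toAdd p'.1) with hle | hle
      · obtain ⟨δ, hδ⟩ := Nat.exists_eq_add_of_le hle
        rw [hδ, pow_add] at h2
        have h4 : a₀ ^ (Multiplicative.toAdd p.1) * 1 =
            a₀ ^ (Multiplicative.toAdd p.1) * a₀ ^ δ := by rw [mul_one]; exact h2
        have := hpow1 δ (mul_left_cancel h4).symm
        omega
      · obtain ⟨δ, hδ⟩ := Nat.exists_eq_add_of_le hle
        rw [hδ, pow_add] at h2
        have h4 : a₀ ^ (Multiplicative.toAdd p'.1) * 1 =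
            a₀ ^ (Multiplicative.toAdd p'.1) * a₀ ^ δ := by rw [mul_one]; exact h2.symm
        have := hpow1 δ (mul_left_cancel h4).symm
        omega
    refine Prod.ext ?_ hbar
    exact Multiplicative.toAdd.injective h3
  have Φsurj : Function.Surjective Φ := by
    intro x
    obtain ⟨t, ht⟩ := lam_decomp x
    refine ⟨(Multiplicative.ofAdd t, (x : (acon a₀).Quotient)), ?_⟩
    simp only [Φ, MonoidHom.coe_mk, OneHom.coe_mk, toAdd_ofAdd]
    rw [mul_comm]
    exact ht.symm
  let E1 : Multiplicative ℕ × (acon a₀).Quotient ≃* Q := MulEquiv.ofBijective Φ ⟨Φinj, Φsurj⟩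
  let E2 : Multiplicative ℕ × (acon a₀).Quotient ≃*
      Multiplicative ℕ × Multiplicative (Fin s →₀ ℕ) := MulEquiv.prodCongr (MulEquiv.refl _) e
  let E3 : Multiplicative ℕ × Multiplicative (Fin s →₀ ℕ) ≃*
      Multiplicative (ℕ × (Fin s →₀ ℕ)) :=
    { toFun := fun p => Multiplicative.ofAdd (Multiplicative.toAdd p.1, Multiplicative.toAdd p.2)
      invFun := fun x => (Multiplicative.ofAdd (Multiplicative.toAdd x).1,
        Multiplicative.ofAdd (Multiplicative.toAdd x).2)
      left_inv := fun p => rfl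
      right_inv := fun x => rfl
      map_mul' := fun p p' => rfl }
  let E4 : ℕ × (Fin s →₀ ℕ) ≃+ (Fin (s+1) →₀ ℕ) :=
    { toFun := fun p => Finsupp.cons p.1 p.2
      invFun := fun f => (f 0, Finsupp.tail f)
      left_inv := fun p => by
        refine Prod.ext ?_ ?_
        · exact Finsupp.cons_zero _ _
        · exact Finsupp.tail_cons _ _
      right_inv := fun f => Finsupp.cons_tail f
      map_add' := fun p p' => by
        ext i
        refine Fin.cases ?_ ?_ i
        · simp only [Finsupp.add_apply, Finsupp.cons_zero, Prod.fst_add]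
        · intro j
          simp only [Finsupp.add_apply, Finsupp.cons_succ, Prod.snd_add] }
  exact ⟨E1.symm.trans (E2.trans (E3.trans E4.toMultiplicative))⟩


/-- the trivial monoid case -/
theorem trivial_case (hs : Sharp Q) (hFG : Monoid.FG Q)
    (htriv : {a : Q | IsAtomM a} = ∅) :
    ∃ r : ℕ, Nonempty (Q ≃* Multiplicative (Fin r →₀ ℕ)) := by
  have hall : ∀ x : Q, x = 1 := by
    intro x
    by_contra hx
    obtain ⟨a, ha, -⟩ := exists_atom_dvd hs hFG hx
    have : a ∈ {a : Q | IsAtomM a} := ha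
    rw [htriv] at this
    exact Set.notMem_empty a this
  refine ⟨0, ⟨?_⟩⟩
  exact
    { toFun := fun _ => 1
      invFun := fun _ => 1
      left_inv := fun x => (hall x).symm
      right_inv := fun f => by
        have h1 : Multiplicative.toAdd f = 0 := Finsupp.ext fun i => i.elim0
        have h2 : f = Multiplicative.ofAdd 0 := by
          rw [← h1, ofAdd_toAdd]
        rw [h2, ofAdd_zero]
      map_mul' := by intro x y; rw [one_mul] }

end Stmt7Aux

section MainInduction

open Stmt7Aux

universe u

theorem Stmt7Aux.main_induction {k : ℕ} (hk : 1 < k) :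
    ∀ (n : ℕ) (Q : Type u) (_ : CancelCommMonoid Q), Monoid.FG Q → Sharp Q → Flat Q k →
      {a : Q | IsAtomM a}.ncard ≤ n →
      ∃ r : ℕ, Nonempty (Q ≃* Multiplicative (Fin r →₀ ℕ)) := by
  intro n
  induction n with
  | zero =>
    intro Q inst hFG hs hflat hcard
    refine trivial_case hs hFG ?_
    have hfin := atoms_finite hs hFG
    have : {a : Q | IsAtomM a}.ncard = 0 := by omega
    exact (Set.ncard_eq_zero hfin).mp this
  | succ n ihn =>
    intro Q inst hFG hs hflat hcard
    rcases Set.eq_empty_or_nonempty {a : Q | IsAtomM a} with hempty | ⟨a₀, ha₀⟩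
    · exact trivial_case hs hFG hempty
    · have ha₀' : IsAtomM a₀ := ha₀
      letI instq : CancelCommMonoid (acon a₀).Quotient :=
        { (inferInstance : CommMonoid (acon a₀).Quotient) with
          mul_left_cancel := fun x y z h => acon_cancel a₀ x y z h }
      haveI hFGi : Monoid.FG Q := hFG
      have hFGq : Monoid.FG (acon a₀).Quotient :=
        Monoid.fg_of_surjective (acon a₀).mk' Con.mk'_surjective
      have hsq : Sharp (acon a₀).Quotient := acon_sharp a₀ hs hFG hk hflat ha₀'
      have hfq : Flat ((acon a₀).Quotient) k := acon_flat a₀ hk hflat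
      -- the number of atoms decreases
      have hfinQ : {a : Q | IsAtomM a}.Finite := atoms_finite hs hFG
      have hcardq : {β : (acon a₀).Quotient | IsAtomM β}.ncard ≤ n := by
        have hmap : ∀ β : (acon a₀).Quotient, β ∈ {β : (acon a₀).Quotient | IsAtomM β} →
            ∃ a : Q, IsAtomM a ∧ a ≠ a₀ ∧ (a : (acon a₀).Quotient) = β :=
          fun β hβ => acon_atom_rep a₀ hs hFG hβ
        choose f hf1 hf2 hf3 using hmap
        classical
        set g : (acon a₀).Quotient → Q :=
          fun β => if hβ : β ∈ {β : (acon a₀).Quotient | IsAtomM β} then f β hβ else 1 with hg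
        have hgmaps : ∀ β ∈ {β : (acon a₀).Quotient | IsAtomM β},
            g β ∈ {a : Q | IsAtomM a} \ {a₀} := by
          intro β hβ
          simp only [hg, dif_pos hβ]
          exact ⟨hf1 β hβ, hf2 β hβ⟩
        have hginj : Set.InjOn g {β : (acon a₀).Quotient | IsAtomM β} := by
          intro β hβ β' hβ' hgg
          simp only [hg, dif_pos hβ, dif_pos hβ'] at hgg
          rw [← hf3 β hβ, ← hf3 β' hβ', hgg]
        have h1 : {β : (acon a₀).Quotient | IsAtomM β}.ncard ≤
            ({a : Q | IsAtomM a} \ {a₀}).ncard :=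
          Set.ncard_le_ncard_of_injOn g hgmaps hginj (hfinQ.subset Set.diff_subset)
        have h2 : ({a : Q | IsAtomM a} \ {a₀}).ncard < {a : Q | IsAtomM a}.ncard :=
          Set.ncard_diff_singleton_lt_of_mem ha₀ hfinQ
        omega
      obtain ⟨r, ⟨e⟩⟩ := ihn ((acon a₀).Quotient) instq hFGq hsq hfq hcardq
      obtain ⟨E⟩ := quotient_step hs hFG hk hflat ha₀' e
      exact ⟨r + 1, ⟨E⟩⟩

end MainInduction

/-- A morphism of (integral) commutative monoids is flat if it satisfies the equational
criterion of flatness: every relation `l p₁ * q₁ = l p₂ * q₂` is generated by a relation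
in the source.  (For integral monoids this is equivalent to the target being a filtered
colimit of free modules over the source.) -/
def IsFlatMonoidHom {M N : Type*} [CommMonoid M] [CommMonoid N] (l : M →* N) : Prop :=
  ∀ (p₁ p₂ : M) (q₁ q₂ : N), l p₁ * q₁ = l p₂ * q₂ →
    ∃ (q : N) (a b : M), q₁ = l a * q ∧ q₂ = l b * q ∧ p₁ * a = p₂ * b

/-- Kunz's theorem for monoids: if `P^♯` is fine and the `k`-Frobenius `x ↦ x^k` (`k > 1`)
is flat, then `P^♯` is a free commutative monoid. -/
theorem stmt7 {P : Type*} [CommMonoid P]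
    (hcancel : ∀ a b c : Associates P, a * b = a * c → b = c)
    (hfg : Monoid.FG (Associates P)) (k : ℕ) (hk : 1 < k)
    (hflat : IsFlatMonoidHom (powMonoidHom k : P →* P)) :
    ∃ r : ℕ, Nonempty (Associates P ≃* Multiplicative (Fin r →₀ ℕ)) := by
  classical
  letI instC : CancelCommMonoid (Associates P) :=
    { (inferInstance : CommMonoid (Associates P)) with
      mul_left_cancel := fun a b c h => hcancel a b c h }
  have hs : Stmt7Aux.Sharp (Associates P) := by
    intro x y h
    obtain ⟨a, rfl⟩ := Associates.mk_surjective x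
    obtain ⟨b, rfl⟩ := Associates.mk_surjective y
    rw [Associates.mk_mul_mk] at h
    have hu := Associates.mk_eq_one.mp h
    exact Associates.mk_eq_one.mpr (isUnit_of_mul_isUnit_left hu)
  have hfl : Stmt7Aux.Flat (Associates P) k := by
    intro p₁ p₂ q₁ q₂ h
    obtain ⟨P₁, rfl⟩ := Associates.mk_surjective p₁
    obtain ⟨P₂, rfl⟩ := Associates.mk_surjective p₂
    obtain ⟨x₁, rfl⟩ := Associates.mk_surjective q₁
    obtain ⟨x₂, rfl⟩ := Associates.mk_surjective q₂
    rw [← Associates.mk_pow, ← Associates.mk_pow, Associates.mk_mul_mk, Associates.mk_mul_mk,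
      Associates.mk_eq_mk_iff_associated] at h
    obtain ⟨u, hu⟩ := h
    have h2 : P₁ ^ k * (x₁ * (u : P)) = P₂ ^ k * x₂ := by rw [← mul_assoc]; exact hu
    have h2' : (powMonoidHom k : P →* P) P₁ * (x₁ * (u : P)) =
        (powMonoidHom k : P →* P) P₂ * x₂ := by
      simpa [powMonoidHom_apply] using h2
    obtain ⟨q, aa, bb, h3, h4, h5⟩ := hflat P₁ P₂ (x₁ * (u : P)) x₂ h2'
    simp only [powMonoidHom_apply] at h3 h4
    refine ⟨Associates.mk q, Associates.mk aa, Associates.mk bb, ?_, ?_, ?_⟩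
    · have hxu : Associates.mk x₁ = Associates.mk (x₁ * (u : P)) :=
        Associates.mk_eq_mk_iff_associated.mpr ⟨u, rfl⟩
      rw [hxu, h3, ← Associates.mk_pow, Associates.mk_mul_mk]
    · rw [h4, ← Associates.mk_pow, Associates.mk_mul_mk]
    · rw [Associates.mk_mul_mk, Associates.mk_mul_mk, h5]
  exact Stmt7Aux.main_induction hk ({a : Associates P | Stmt7Aux.IsAtomM a}.ncard)
    (Associates P) instC hfg hs hfl le_rfl
end

section
/- Combinatorial Artin–Rees lemma: let P be a pointed monoid whose sharp quotient P^♯ is finitely generated, J ⊂ P an ideal, M a finitely generated P-module, and M_0 ⊂ M a P-submodule. Then there exists c ∈ ℕ such that J^n M ∩ M_0 = J^{n−c}(J^c M ∩ M_0) for every n > c. -/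
/-- For a pointed monoid `P` acting on a pointed `P`-module `M`, the set `J^n · S`:
all elements `(j₁ ⋯ jₙ) • s` with `jᵢ ∈ J` and `s ∈ S`. -/
def smulPow {P M : Type*} [CommMonoidWithZero P] [Zero M] [MulActionWithZero P M]
    (J : Set P) (n : ℕ) (S : Set M) : Set M :=
  {x | ∃ f : Fin n → P, (∀ i, f i ∈ J) ∧ ∃ s ∈ S, x = (∏ i, f i) • s}

section AR

variable {P : Type*} [CommMonoid P]

/-- `p` is a product of `n` elements of `J`. -/
def ARIsProd (J : Set P) (n : ℕ) (p : P) : Prop :=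
  ∃ f : Fin n → P, (∀ i, f i ∈ J) ∧ p = ∏ i, f i

theorem ARIsProd.one (J : Set P) : ARIsProd J 0 1 :=
  ⟨fun i => i.elim0, fun i => i.elim0, by simp⟩

theorem ARIsProd.mul {J : Set P} {m n : ℕ} {p q : P} (hp : ARIsProd J m p)
    (hq : ARIsProd J n q) : ARIsProd J (m + n) (p * q) := by
  obtain ⟨f, hf, rfl⟩ := hp
  obtain ⟨g, hg, rfl⟩ := hq
  refine ⟨Fin.append f g, fun i => ?_, ?_⟩
  · refine Fin.addCases (fun i => ?_) (fun i => ?_) i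
    · simpa using hf i
    · simpa using hg i
  · rw [Fin.prod_univ_add]
    simp

theorem ARIsProd.split {J : Set P} {m n : ℕ} {p : P} (hp : ARIsProd J (m + n) p) :
    ∃ p₁ p₂, ARIsProd J m p₁ ∧ ARIsProd J n p₂ ∧ p = p₁ * p₂ := by
  obtain ⟨f, hf, rfl⟩ := hp
  exact ⟨∏ i : Fin m, f (Fin.castAdd n i), ∏ i : Fin n, f (Fin.natAdd m i),
    ⟨_, fun i => hf _, rfl⟩, ⟨_, fun i => hf _, rfl⟩, Fin.prod_univ_add f⟩

theorem ARIsProd.mul_left {J : Set P} (hJ : ∀ x ∈ J, ∀ p : P, p * x ∈ J)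
    {n : ℕ} {p : P} (hp : ARIsProd J n p) (hn : 0 < n) (q : P) : ARIsProd J n (q * p) := by
  obtain ⟨d, rfl⟩ : ∃ d, n = d + 1 := ⟨n - 1, by omega⟩
  obtain ⟨f, hf, rfl⟩ := hp
  refine ⟨Fin.cons (q * f 0) (fun i => f i.succ), fun i => ?_, ?_⟩
  · refine Fin.cases ?_ (fun i => ?_) i
    · simpa using hJ _ (hf 0) q
    · simpa using hf i.succ
  · rw [Fin.prod_univ_succ, Fin.prod_univ_succ]
    simp [mul_assoc]

theorem ARIsProd.pow {J : Set P} {a : P} (ha : a ∈ J) (m : ℕ) : ARIsProd J m (a ^ m) := by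
  induction m with
  | zero => simpa using ARIsProd.one J
  | succ m ih => rw [pow_succ]; exact ih.mul ⟨fun _ => a, fun _ => ha, by simp⟩

theorem ARIsProd.finsetProd {J : Set P} {ι : Type*} (t : Finset ι) (n : ι → ℕ) (p : ι → P)
    (h : ∀ j ∈ t, ARIsProd J (n j) (p j)) :
    ARIsProd J (∑ j ∈ t, n j) (∏ j ∈ t, p j) := by
  classical
  induction t using Finset.induction with
  | empty => simpa using ARIsProd.one J
  | insert _ _ hx ih =>
    rw [Finset.sum_insert hx, Finset.prod_insert hx]
    exact (h _ (Finset.mem_insert_self _ _)).mul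
      (ih fun j hj => h j (Finset.mem_insert_of_mem hj))

/-- value of an exponent vector on generators -/
def ARval {ι : Type*} [Fintype ι] (g : ι → P) (x : ι → ℕ) : P := ∏ i, g i ^ x i

theorem ARval_zero {ι : Type*} [Fintype ι] (g : ι → P) : ARval g 0 = 1 := by
  simp [ARval]

theorem ARval_add {ι : Type*} [Fintype ι] (g : ι → P) (x y : ι → ℕ) :
    ARval g (x + y) = ARval g x * ARval g y := by
  simp [ARval, pow_add, Finset.prod_mul_distrib]

theorem ARval_single {ι : Type*} [Fintype ι] [DecidableEq ι] (g : ι → P) (j : ι) :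
    ARval g (Pi.single j 1) = g j := by
  rw [ARval, Finset.prod_eq_single j]
  · simp
  · intro i _ hij; simp [Pi.single_eq_of_ne hij]
  · simp

theorem ARsum_single {ι : Type*} [Fintype ι] [DecidableEq ι] (j : ι) :
    ∑ i, (Pi.single j 1 : ι → ℕ) i = 1 := by
  rw [Finset.sum_eq_single j]
  · simp
  · intro i _ hij; simp [Pi.single_eq_of_ne hij]
  · simp

theorem ARIsProd_val {J : Set P} {ι : Type*} [Fintype ι] {g : ι → P} (hg : ∀ i, g i ∈ J)
    (y : ι → ℕ) : ARIsProd J (∑ i, y i) (ARval g y) :=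
  ARIsProd.finsetProd _ _ _ fun j _ => ARIsProd.pow (hg j) (y j)

/-- Dickson's lemma: any set of exponent vectors has a finite dominating subset. -/
theorem ARdickson {ι : Type*} [Fintype ι] (S : Set (ι → ℕ)) :
    ∃ F : Finset (ι → ℕ), ↑F ⊆ S ∧ ∀ v ∈ S, ∃ f ∈ F, f ≤ v := by
  classical
  have hwo : ∀ _i : ι, IsWellOrder ℕ (· < ·) := fun _ => inferInstance
  have hpwo : S.IsPWO := Set.isPWO_of_wellQuasiOrderedLE S
  set Mn : Set (ι → ℕ) := {v | v ∈ S ∧ ∀ w ∈ S, w ≤ v → w = v} with hMn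
  have hsub : Mn ⊆ S := fun v hv => hv.1
  have hanti : IsAntichain (· ≤ ·) Mn := fun a ha b hb hne hab => hne (hb.2 a ha.1 hab)
  have hfin : Mn.Finite := hanti.finite_of_partiallyWellOrderedOn (hpwo.mono hsub)
  have dom : ∀ N (v : ι → ℕ), v ∈ S → (∑ i, v i) = N → ∃ f ∈ Mn, f ≤ v := by
    intro N
    induction N using Nat.strong_induction_on with
    | _ N ih =>
      intro v hv hsum
      by_cases hmin : ∀ w ∈ S, w ≤ v → w = v
      · exact ⟨v, ⟨hv, hmin⟩, le_refl v⟩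
      · push_neg at hmin
        obtain ⟨w, hw, hle, hne⟩ := hmin
        have hle' : ∀ i, w i ≤ v i := fun i => hle i
        have hlt : ∑ i, w i < ∑ i, v i := by
          refine Finset.sum_lt_sum (fun i _ => hle' i) ?_
          by_contra h
          push_neg at h
          exact hne (le_antisymm hle fun i => h i (Finset.mem_univ i))
        obtain ⟨f, hf, hfw⟩ := ih _ (hsum ▸ hlt) w hw rfl
        exact ⟨f, hf, le_trans hfw hle⟩
  refine ⟨hfin.toFinset, by simpa using hsub, fun v hv => ?_⟩
  obtain ⟨f, hf, hfv⟩ := dom _ v hv rfl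
  exact ⟨f, hfin.mem_toFinset.2 hf, hfv⟩

end AR

/-- Combinatorial Artin–Rees lemma: for a pointed monoid `P` with finitely generated sharp
quotient, an ideal `J ⊆ P`, a finitely generated pointed `P`-module `M` and a submodule
`M₀ ⊆ M`, there is `c ∈ ℕ` with `J^n M ∩ M₀ = J^(n-c) (J^c M ∩ M₀)` for all `n > c`. -/
theorem stmt8 {P M : Type*} [CommMonoidWithZero P] [Zero M] [MulActionWithZero P M]
    (hfg : Monoid.FG (Associates P))
    (J : Set P) (hJ0 : (0 : P) ∈ J) (hJ : ∀ x ∈ J, ∀ p : P, p * x ∈ J)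
    (hMfg : ∃ S : Finset M, ∀ m : M, ∃ p : P, ∃ s ∈ S, m = p • s)
    (M₀ : Set M) (h₀ : (0 : M) ∈ M₀) (hM₀ : ∀ m ∈ M₀, ∀ p : P, p • m ∈ M₀) :
    ∃ c : ℕ, ∀ n : ℕ, c < n →
      smulPow J n Set.univ ∩ M₀ = smulPow J (n - c) (smulPow J c Set.univ ∩ M₀) := by
  classical
  obtain ⟨S, hS⟩ := hMfg
  obtain ⟨T, hT⟩ := hfg.fg_top
  choose gl hgl using (Associates.mk_surjective (M := P))
  set k := T.card with hk
  obtain ⟨t, ht⟩ : ∃ t : Fin k → Associates P, ∀ i, t i = (T.equivFin.symm i : Associates P) :=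
    ⟨_, fun _ => rfl⟩
  obtain ⟨g, hgdef⟩ : ∃ g : Fin k → P, ∀ i, Associates.mk (g i) = t i :=
    ⟨fun i => gl (t i), fun i => hgl _⟩
  -- every element of P is associated to a value of `g`
  have L1 : ∀ p : P, ∃ x : Fin k → ℕ, Associated (ARval g x) p := by
    intro p
    have key : ∀ a, a ∈ Submonoid.closure (↑T : Set (Associates P)) →
        ∃ x : Fin k → ℕ, Associates.mk (ARval g x) = a := by
      intro a ha
      induction ha using Submonoid.closure_induction with
      | mem a ha =>
        refine ⟨Pi.single (T.equivFin ⟨a, ha⟩) 1, ?_⟩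
        rw [ARval_single, hgdef, ht]
        simp
      | one => exact ⟨0, by rw [ARval_zero]; simp⟩
      | mul a b _ _ iha ihb =>
        obtain ⟨x, hx⟩ := iha
        obtain ⟨y, hy⟩ := ihb
        exact ⟨x + y, by rw [ARval_add, ← Associates.mk_mul_mk, hx, hy]⟩
    obtain ⟨x, hx⟩ := key (Associates.mk p) (by rw [hT]; trivial)
    exact ⟨x, Associates.mk_eq_mk_iff_associated.1 hx⟩
  -- J is saturated under association
  have hJsat : ∀ p q : P, Associated p q → p ∈ J → q ∈ J := by
    rintro p q ⟨u, rfl⟩ hp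
    rw [mul_comm]
    exact hJ p hp u
  -- ideal generators of J
  obtain ⟨FJ, hFJ1, hFJ2⟩ := ARdickson {x : Fin k → ℕ | ARval g x ∈ J}
  obtain ⟨κ, hκdef⟩ : ∃ κ : {x // x ∈ FJ} → P, ∀ f, κ f = ARval g f.val := ⟨_, fun _ => rfl⟩
  have hκJ : ∀ j, κ j ∈ J := fun j => by rw [hκdef]; exact hFJ1 j.2
  have LJ : ∀ p ∈ J, ∃ (j : {x // x ∈ FJ}) (x : Fin k → ℕ) (u : Pˣ),
      p = κ j * ARval g x * u := by
    intro p hp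
    obtain ⟨x₀, hx₀⟩ := L1 p
    have hx₀J : ARval g x₀ ∈ J := hJsat p _ hx₀.symm hp
    obtain ⟨f, hfF, hfle⟩ := hFJ2 x₀ hx₀J
    obtain ⟨u, hu⟩ := hx₀
    refine ⟨⟨f, hfF⟩, x₀ - f, u, ?_⟩
    have hadd : f + (x₀ - f) = x₀ := by
      funext i
      have h2 : f i ≤ x₀ i := hfle i
      simp only [Pi.add_apply, Pi.sub_apply]
      omega
    rw [hκdef, ← ARval_add, hadd]
    exact hu.symm
  -- decomposing a product of n elements of J
  have C1 : ∀ (n : ℕ) (f : Fin n → P), (∀ i, f i ∈ J) →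
      ∃ (x : Fin k → ℕ) (y : {x // x ∈ FJ} → ℕ) (u : Pˣ),
        (∑ j, y j) = n ∧ ∏ i, f i = ARval κ y * ARval g x * u := by
    intro n
    induction n with
    | zero =>
      intro f _
      exact ⟨0, 0, 1, by simp, by simp [ARval_zero]⟩
    | succ n ih =>
      intro f hf
      obtain ⟨x, y, u, hsum, hprod⟩ := ih (fun i => f i.succ) (fun i => hf i.succ)
      obtain ⟨j, z, u', hu'⟩ := LJ (f 0) (hf 0)
      refine ⟨x + z, y + Pi.single j 1, u' * u, ?_, ?_⟩
      · simp only [Pi.add_apply]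
        rw [Finset.sum_add_distrib, hsum, ARsum_single]
      · rw [Fin.prod_univ_succ, hprod, hu', ARval_add, ARval_add, ARval_single,
          Units.val_mul]
        simp only [mul_assoc, mul_comm, mul_left_comm]
  -- Dickson for each generator of M
  have hU := fun s : M => ARdickson
    {v : (Fin k ⊕ {x // x ∈ FJ}) → ℕ |
      (ARval g (fun i => v (Sum.inl i)) * ARval κ (fun j => v (Sum.inr j))) • s ∈ M₀}
  choose F hF1 hF2 using hU
  obtain ⟨c, hc⟩ : ∃ c, c = S.sup (fun s => (F s).sup (fun f => ∑ j, f (Sum.inr j))) := ⟨_, rfl⟩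
  have hcb : ∀ s ∈ S, ∀ e' ∈ F s, (∑ j, e' (Sum.inr j)) ≤ c := by
    intro s hs e' he'
    rw [hc]
    exact le_trans (Finset.le_sup (f := fun f => ∑ j, f (Sum.inr j)) he')
      (Finset.le_sup (f := fun s => (F s).sup (fun f => ∑ j, f (Sum.inr j))) hs)
  clear hc
  refine ⟨c, fun n hn => ?_⟩
  ext xe
  constructor
  · rintro ⟨⟨f, hfJ, m, -, rfl⟩, hxM₀⟩
    obtain ⟨q, s, hsS, rfl⟩ := hS m
    obtain ⟨x₁, y, u, hsum, hprod⟩ := C1 n f hfJ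
    obtain ⟨x₂, u₂, hu₂⟩ := L1 q
    obtain ⟨X, u₃, hscal⟩ : ∃ (X : Fin k → ℕ) (u₃ : Pˣ),
        (∏ i, f i) * q = ARval κ y * ARval g X * u₃ := by
      refine ⟨x₁ + x₂, u * u₂, ?_⟩
      rw [hprod, ← hu₂, ARval_add, Units.val_mul]
      simp only [mul_assoc, mul_comm, mul_left_comm]
    have hxe : (∏ i, f i) • q • s = (ARval κ y * ARval g X * (u₃ : P)) • s := by
      rw [← mul_smul, hscal]
    -- membership of the exponent vector in U s
    have hvU : (ARval g X * ARval κ y) • s ∈ M₀ := by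
      have h5 : (ARval g X * ARval κ y) • s = (↑u₃⁻¹ : P) • ((∏ i, f i) • q • s) := by
        rw [hxe, ← mul_smul]
        congr 1
        rw [mul_comm ((u₃⁻¹ : Pˣ) : P), mul_assoc (ARval κ y * ARval g X), Units.mul_inv,
          mul_one]
        exact mul_comm _ _
      rw [h5]
      exact hM₀ _ hxM₀ _
    obtain ⟨e, heF, hev⟩ := hF2 s (Sum.elim X y) hvU
    obtain ⟨ze, hXsplit⟩ : ∃ ze : Fin k → ℕ, X = (fun i => e (Sum.inl i)) + ze := by
      refine ⟨fun i => X i - e (Sum.inl i), funext fun i => ?_⟩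
      have h2 : e (Sum.inl i) ≤ X i := hev (Sum.inl i)
      simp only [Pi.add_apply]
      omega
    obtain ⟨zr, hysplit⟩ : ∃ zr : {x // x ∈ FJ} → ℕ, y = (fun j => e (Sum.inr j)) + zr := by
      refine ⟨fun j => y j - e (Sum.inr j), funext fun j => ?_⟩
      have h2 : e (Sum.inr j) ≤ y j := hev (Sum.inr j)
      simp only [Pi.add_apply]
      omega
    obtain ⟨ne', hne'⟩ : ∃ ne', ne' = ∑ j, e (Sum.inr j) := ⟨_, rfl⟩
    have hnec : ne' ≤ c := by
      rw [hne']
      exact hcb s hsS e heF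
    have hsumzr : ∑ j, zr j = (n - c) + (c - ne') := by
      have h6 : ∑ j, y j = ne' + ∑ j, zr j := by
        conv_lhs => rw [hysplit]
        simp only [Pi.add_apply]
        rw [Finset.sum_add_distrib, hne']
      omega
    -- split the product of the J-elements
    have hzrval : ARIsProd J ((n - c) + (c - ne')) (ARval κ zr) := by
      rw [← hsumzr]; exact ARIsProd_val hκJ zr
    obtain ⟨α₁, α₂, hα₁, hα₂, hα⟩ := hzrval.split
    have hβ : ARIsProd J ne' (ARval κ (fun j => e (Sum.inr j))) := by
      rw [hne']
      exact ARIsProd_val hκJ _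
    have hin : ARIsProd J c (α₂ * ARval κ (fun j => e (Sum.inr j))) := by
      have := hα₂.mul hβ
      rwa [show c - ne' + ne' = c by omega] at this
    have hout : ARIsProd J (n - c)
        (((u₃ : P) * ARval g ze) * α₁) :=
      hα₁.mul_left hJ (by omega) _
    -- inner element
    have hw'mem : ((α₂ * ARval κ (fun j => e (Sum.inr j))) * ARval g (fun i => e (Sum.inl i))) • s
        ∈ smulPow J c Set.univ ∩ M₀ := by
      constructor
      · obtain ⟨fc, hfc, hpc⟩ := hin
        exact ⟨fc, hfc, ARval g (fun i => e (Sum.inl i)) • s, Set.mem_univ _, by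
          rw [← hpc, mul_smul]⟩
      · have heU := hF1 s heF
        have h7 : ((α₂ * ARval κ (fun j => e (Sum.inr j))) * ARval g (fun i => e (Sum.inl i))) • s
            = α₂ • ((ARval g (fun i => e (Sum.inl i)) *
            ARval κ (fun j => e (Sum.inr j))) • s) := by
          rw [← mul_smul]
          congr 1
          simp only [mul_assoc, mul_comm, mul_left_comm]
        rw [h7]
        exact hM₀ _ heU _
    -- final assembly
    obtain ⟨fo, hfo, hpo⟩ := hout
    refine ⟨fo, hfo,
      ((α₂ * ARval κ (fun j => e (Sum.inr j))) * ARval g (fun i => e (Sum.inl i))) • s,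
      hw'mem, ?_⟩
    rw [hxe, ← hpo, ← mul_smul]
    congr 1
    rw [hysplit, hXsplit, ARval_add, ARval_add, hα]
    simp only [mul_assoc, mul_comm, mul_left_comm]
  · rintro ⟨f, hfJ, y, ⟨⟨h, hhJ, s', -, rfl⟩, hyM₀⟩, rfl⟩
    have h1 : ARIsProd J ((n - c) + c) ((∏ i, f i) * ∏ i, h i) :=
      ARIsProd.mul ⟨f, hfJ, rfl⟩ ⟨h, hhJ, rfl⟩
    rw [show n - c + c = n by omega] at h1
    obtain ⟨f', hf', hp'⟩ := h1
    constructor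
    · exact ⟨f', hf', s', Set.mem_univ _, by rw [← hp', mul_smul]⟩
    · exact hM₀ _ hyM₀ _
end
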